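/- arXiv:1309.1559 — 2 statements merged into one kernel-verified Lean document; each statement's English description precedes it below -/
import Mathlib

section
/- For every chordal graph G with at least one vertex, the treewidth of G equals ω(G) − 1, where ω(G) is the maximum size of a clique in G. -/
/-! Common definitions: chordality, (minimal) triangulations, potential maximal cliques,
minimal separators, tree decompositions and treewidth, minors and minor models,
planarity (via Wagner's characterization), circle and circular-arc graphs, grids. -/

/-- A chord of a closed walk `c` in `G`: an edge of `G` between two vertices of the walk
that is not an edge of the walk (i.e. joining two nonconsecutive vertices of a cycle). -/
def HasChord {V : Type} (G : SimpleGraph V) {v : V} (c : G.Walk v v) : Prop :=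
  ∃ u w : V, u ∈ c.support ∧ w ∈ c.support ∧ G.Adj u w ∧ s(u, w) ∉ c.edges

/-- A graph is chordal if every cycle of length at least four has a chord. -/
def Chordal {V : Type} (G : SimpleGraph V) : Prop :=
  ∀ (v : V) (c : G.Walk v v), c.IsCycle → 4 ≤ c.length → HasChord G c

/-- `H` is a triangulation of `G`: a chordal supergraph of `G` on the same vertex set. -/
def IsTriangulation {V : Type} (G H : SimpleGraph V) : Prop :=
  G ≤ H ∧ Chordal H

/-- `H` is a minimal triangulation of `G`: no proper subgraph of `H` containing `G`
is chordal. -/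
def IsMinimalTriangulation {V : Type} (G H : SimpleGraph V) : Prop :=
  IsTriangulation G H ∧ ∀ H' : SimpleGraph V, G ≤ H' → H' < H → ¬ Chordal H'

/-- A maximal clique: a clique contained in no strictly larger clique. -/
def IsMaxClique {V : Type} (G : SimpleGraph V) (S : Set V) : Prop :=
  G.IsClique S ∧ ∀ T : Set V, G.IsClique T → S ⊆ T → T = S

/-- A potential maximal clique of `G`: a maximal clique of some minimal triangulation of `G`. -/
def IsPotentialMaximalClique {V : Type} (G : SimpleGraph V) (Ω : Set V) : Prop :=
  ∃ H : SimpleGraph V, IsMinimalTriangulation G H ∧ IsMaxClique H Ω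

/-- `S` is a `u,v`-separator: `u, v ∉ S` and every walk from `u` to `v` meets `S`
(equivalently, `u` and `v` lie in different components of `G − S`). -/
def IsSeparator {V : Type} (G : SimpleGraph V) (u v : V) (S : Set V) : Prop :=
  u ∉ S ∧ v ∉ S ∧ ∀ p : G.Walk u v, ∃ x ∈ p.support, x ∈ S

/-- A minimal separator of `G`: a minimal `u,v`-separator for some nonadjacent pair `u ≠ v`. -/
def IsMinimalSeparator {V : Type} (G : SimpleGraph V) (S : Set V) : Prop :=
  ∃ u v : V, u ≠ v ∧ ¬ G.Adj u v ∧ IsSeparator G u v S ∧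
    ∀ S' : Set V, S' ⊂ S → ¬ IsSeparator G u v S'

/-- `(T, bag)` is a tree decomposition of `G`. -/
def IsTreeDecomposition {V ι : Type} (G : SimpleGraph V) (T : SimpleGraph ι)
    (bag : ι → Set V) : Prop :=
  T.IsTree ∧
  (∀ v : V, ∃ i, v ∈ bag i) ∧
  (∀ u v : V, G.Adj u v → ∃ i, u ∈ bag i ∧ v ∈ bag i) ∧
  (∀ v : V, (T.induce {i | v ∈ bag i}).Connected)

/-- `G` has a tree decomposition of width at most `k`. -/
def HasTreeDecompOfWidth {V : Type} (G : SimpleGraph V) (k : ℕ) : Prop :=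
  ∃ (ι : Type) (T : SimpleGraph ι) (bag : ι → Set V),
    IsTreeDecomposition G T bag ∧ ∀ i, (bag i).ncard ≤ k + 1

/-- The treewidth of `G`: the least width of a tree decomposition of `G`. -/
noncomputable def treewidth {V : Type} (G : SimpleGraph V) : ℕ :=
  sInf {k | HasTreeDecompOfWidth G k}

/-- `H` is a minor of `G` (branch-set formulation: nonempty pairwise disjoint connected
branch sets, with an edge of `G` between branch sets of adjacent vertices of `H`). -/
def IsMinorOf {W V : Type} (H : SimpleGraph W) (G : SimpleGraph V) : Prop :=
  ∃ B : W → Set V,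
    (∀ w, (B w).Nonempty) ∧
    (∀ w, (G.induce (B w)).Connected) ∧
    (∀ w₁ w₂ : W, w₁ ≠ w₂ → Disjoint (B w₁) (B w₂)) ∧
    (∀ w₁ w₂ : W, H.Adj w₁ w₂ → ∃ u ∈ B w₁, ∃ v ∈ B w₂, G.Adj u v)

/-- `M` is the vertex set of a minor model of `H` in `G`. -/
def IsMinorModel {W V : Type} (H : SimpleGraph W) (G : SimpleGraph V) (M : Set V) : Prop :=
  ∃ B : W → Set V,
    (∀ w, (B w).Nonempty) ∧
    (∀ w, (G.induce (B w)).Connected) ∧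
    (∀ w₁ w₂ : W, w₁ ≠ w₂ → Disjoint (B w₁) (B w₂)) ∧
    (∀ w₁ w₂ : W, H.Adj w₁ w₂ → ∃ u ∈ B w₁, ∃ v ∈ B w₂, G.Adj u v) ∧
    M = ⋃ w, B w

/-- Planarity, via Wagner's characterization: a finite simple graph is planar iff it has
neither `K₅` nor `K₃,₃` as a minor. -/
def IsPlanar {W : Type} (G : SimpleGraph W) : Prop :=
  ¬ IsMinorOf (SimpleGraph.completeGraph (Fin 5)) G ∧
  ¬ IsMinorOf (completeBipartiteGraph (Fin 3) (Fin 3)) G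

/-- A circle graph: an intersection graph of chords of the unit circle. -/
def IsCircleGraph {V : Type} (G : SimpleGraph V) : Prop :=
  ∃ a b : V → EuclideanSpace ℝ (Fin 2),
    (∀ v, a v ∈ Metric.sphere (0 : EuclideanSpace ℝ (Fin 2)) 1) ∧
    (∀ v, b v ∈ Metric.sphere (0 : EuclideanSpace ℝ (Fin 2)) 1) ∧
    (∀ v, a v ≠ b v) ∧
    ∀ v w : V, v ≠ w →
      (G.Adj v w ↔ (segment ℝ (a v) (b v) ∩ segment ℝ (a w) (b w)).Nonempty)

/-- A circular-arc graph: an intersection graph of arcs of the unit circle, an arc being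
the image of an interval `[s, t]` under the circle parametrization `θ ↦ e^{iθ}`. -/
def IsCircularArcGraph {V : Type} (G : SimpleGraph V) : Prop :=
  ∃ s t : V → ℝ,
    (∀ v, s v ≤ t v) ∧
    ∀ v w : V, v ≠ w →
      (G.Adj v w ↔
        (circleMap 0 1 '' Set.Icc (s v) (t v) ∩
          circleMap 0 1 '' Set.Icc (s w) (t w)).Nonempty)

/-- A weakly chordal graph: neither the graph nor its complement contains an induced cycle
of length at least five, i.e. every such cycle has a chord. -/
def WeaklyChordal {V : Type} (G : SimpleGraph V) : Prop :=
  (∀ (v : V) (c : G.Walk v v), c.IsCycle → 5 ≤ c.length → HasChord G c) ∧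
  (∀ (v : V) (c : Gᶜ.Walk v v), c.IsCycle → 5 ≤ c.length → HasChord Gᶜ c)

/-- The clique number of `G`: the maximum size of a clique. -/
noncomputable def cliqueNumber {V : Type} (G : SimpleGraph V) : ℕ :=
  sSup {n | ∃ S : Set V, G.IsClique S ∧ S.ncard = n}

/-- `C` is a connected component of the graph `G − Ω`. -/
def IsConnCompAvoiding {V : Type} (G : SimpleGraph V) (Ω C : Set V) : Prop :=
  C.Nonempty ∧ C ⊆ Ωᶜ ∧ (G.induce C).Connected ∧
  ∀ u v : V, u ∈ C → v ∈ Ωᶜ → G.Adj u v → v ∈ C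

/-- The `k × k` grid graph. -/
def gridGraph (k : ℕ) : SimpleGraph (Fin k × Fin k) :=
  SimpleGraph.fromRel fun p q =>
    (p.1 = q.1 ∧ p.2.val + 1 = q.2.val) ∨ (p.2 = q.2 ∧ p.1.val + 1 = q.1.val)


section AuxChordal
open SimpleGraph
variable {V ι : Type}




/-- Walk inside a connected induced subgraph. -/
lemma walk_in_set (T : SimpleGraph ι) {s : Set ι} (h : (T.induce s).Connected)
    {x y : ι} (hx : x ∈ s) (hy : y ∈ s) :
    ∃ p : T.Walk x y, ∀ z ∈ p.support, z ∈ s := by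
  obtain ⟨w⟩ := h.preconnected ⟨x, hx⟩ ⟨y, hy⟩
  refine ⟨w.map (SimpleGraph.Embedding.induce s).toHom, ?_⟩
  intro z hz
  change z ∈ (w.map (SimpleGraph.Embedding.induce s).toHom).support at hz
  rw [SimpleGraph.Walk.support_map, List.mem_map] at hz
  obtain ⟨a, _, rfl⟩ := hz
  exact a.2

lemma split_len {G : SimpleGraph V} [DecidableEq V] {c y : V} (r : G.Walk c y) {u : V}
    (hur : u ∈ r.support) (huc : u ≠ c) :
    (r.dropUntil u hur).length < r.length := by
  have hsplit : (r.takeUntil u hur).length + (r.dropUntil u hur).length = r.length := by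
    conv_rhs => rw [← r.take_spec hur]
    rw [SimpleGraph.Walk.length_append]
  have hpos : 0 < (r.takeUntil u hur).length := by
    rcases Nat.eq_zero_or_pos (r.takeUntil u hur).length with h0 | h0
    · exact absurd (SimpleGraph.Walk.eq_of_length_eq_zero h0).symm huc
    · exact h0
  omega

/-- Shortcut lemma: a chord of a walk yields a strictly shorter walk with the
same endpoints, supported inside the original support. -/
lemma exists_shorter {G : SimpleGraph V} :
    ∀ {x y : V} (p : G.Walk x y) {u w : V}, u ∈ p.support → w ∈ p.support →
    G.Adj u w → s(u, w) ∉ p.edges →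
    ∃ q : G.Walk x y, (∀ z ∈ q.support, z ∈ p.support) ∧ q.length < p.length := by
  classical
  intro x y p
  induction p with
  | nil =>
    intro u w hu hw ha _
    simp only [SimpleGraph.Walk.support_nil, List.mem_singleton] at hu hw
    rw [hu, hw] at ha
    exact absurd ha (G.irrefl)
  | @cons x c y h r ih =>
    intro u w hu hw ha he
    rw [SimpleGraph.Walk.support_cons, List.mem_cons] at hu hw
    rw [SimpleGraph.Walk.edges_cons, List.mem_cons] at he
    push_neg at he
    obtain ⟨he1, he2⟩ := he
    by_cases hur : u ∈ r.support
    · by_cases hwr : w ∈ r.support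
      · obtain ⟨q, hq1, hq2⟩ := ih hur hwr ha he2
        refine ⟨SimpleGraph.Walk.cons h q, ?_, by simpa using Nat.succ_lt_succ hq2⟩
        intro z hz
        rw [SimpleGraph.Walk.support_cons, List.mem_cons] at hz ⊢
        rcases hz with hz | hz
        · exact Or.inl hz
        · exact Or.inr (hq1 z hz)
      · -- w = x, u ∈ r.support
        have hwx : w = x := by rcases hw with h' | h' <;> [exact h'; exact absurd h' hwr]
        have huc : u ≠ c := fun h' => he1 (by rw [h', hwx, Sym2.eq_swap])
        have ha' : G.Adj x u := by rw [← hwx]; exact ha.symm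
        refine ⟨SimpleGraph.Walk.cons ha' (r.dropUntil u hur), ?_, ?_⟩
        · intro z hz
          rw [SimpleGraph.Walk.support_cons, List.mem_cons] at hz ⊢
          rcases hz with hz | hz
          · exact Or.inl hz
          · exact Or.inr (r.support_dropUntil_subset hur hz)
        · simpa using Nat.succ_lt_succ (split_len r hur huc)
    · have hux : u = x := by rcases hu with h' | h' <;> [exact h'; exact absurd h' hur]
      by_cases hwr : w ∈ r.support
      · have hwc : w ≠ c := fun h' => he1 (by rw [h', hux])
        have ha' : G.Adj x w := by rw [← hux]; exact ha
        refine ⟨SimpleGraph.Walk.cons ha' (r.dropUntil w hwr), ?_, ?_⟩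
        · intro z hz
          rw [SimpleGraph.Walk.support_cons, List.mem_cons] at hz ⊢
          rcases hz with hz | hz
          · exact Or.inl hz
          · exact Or.inr (r.support_dropUntil_subset hwr hz)
        · simpa using Nat.succ_lt_succ (split_len r hwr hwc)
      · have hwx : w = x := by rcases hw with h' | h' <;> [exact h'; exact absurd h' hwr]
        rw [hux, hwx] at ha
        exact absurd ha (G.irrefl)

lemma tree_edge {T : SimpleGraph ι} (hT : T.IsTree) {i b : ι} (h : T.Adj i b)
    (p : T.Walk i b) : s(i, b) ∈ p.edges :=
  ((SimpleGraph.isBridge_iff_adj_and_forall_walk_mem_edges.mp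
    (SimpleGraph.isAcyclic_iff_forall_adj_isBridge.mp hT.IsAcyclic h)) p)

/-- Helly property: pairwise intersecting subtrees of a tree decomposition share a node. -/
lemma helly {T : SimpleGraph ι} (hT : T.IsTree) (bag : ι → Set V) (S : Finset V)
    (hconn : ∀ v ∈ S, (T.induce {i | v ∈ bag i}).Connected)
    (hpair : ∀ u ∈ S, ∀ v ∈ S, ∃ i, u ∈ bag i ∧ v ∈ bag i) :
    ∃ i, ∀ v ∈ S, v ∈ bag i := by
  classical
  induction S using Finset.induction with
  | empty =>
    obtain ⟨i⟩ := hT.isConnected.nonempty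
    exact ⟨i, by simp⟩
  | @insert a S ha ih =>
    obtain ⟨i₀, hi₀⟩ := ih (fun v hv => hconn v (Finset.mem_insert_of_mem hv))
      (fun u hu v hv => hpair u (Finset.mem_insert_of_mem hu) v (Finset.mem_insert_of_mem hv))
    have haconn := hconn a (Finset.mem_insert_self a S)
    obtain ⟨⟨j₀, hj₀⟩⟩ := haconn.nonempty
    set W : Set ℕ := {n | ∃ (i j : ι) (p : T.Walk i j),
      (∀ u ∈ S, u ∈ bag i) ∧ a ∈ bag j ∧ p.length = n} with hW
    have hWne : W.Nonempty := by
      obtain ⟨p⟩ := hT.isConnected.preconnected i₀ j₀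
      exact ⟨p.length, i₀, j₀, p, hi₀, hj₀, rfl⟩
    obtain ⟨i, j, p, hi, hj, hlen⟩ := Nat.sInf_mem hWne
    rcases Nat.eq_zero_or_pos (sInf W) with hd | hd
    · rw [hd] at hlen
      have := SimpleGraph.Walk.eq_of_length_eq_zero hlen
      refine ⟨i, fun v hv => ?_⟩
      rcases Finset.mem_insert.mp hv with rfl | hv
      · rw [this]; exact hj
      · exact hi v hv
    · exfalso
      cases p with
      | nil => simp at hlen; omega
      | @cons _ b _ hadj q =>
        -- key facts
        have hia : a ∉ bag i := fun h' =>
          by have : sInf W ≤ 0 := Nat.sInf_le ⟨i, i, SimpleGraph.Walk.nil, hi, h', rfl⟩; omega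
        have hiq : i ∉ q.support := by
          intro hiq
          have : sInf W ≤ (q.dropUntil i hiq).length :=
            Nat.sInf_le ⟨i, j, q.dropUntil i hiq, hi, hj, rfl⟩
          have h2 : (q.takeUntil i hiq).length + (q.dropUntil i hiq).length = q.length := by
            conv_rhs => rw [← q.take_spec hiq]
            rw [SimpleGraph.Walk.length_append]
          simp only [SimpleGraph.Walk.length_cons] at hlen
          omega
        have hqe : s(i, b) ∉ q.edges := fun h' => hiq (q.fst_mem_support_of_mem_edges h')
        have hub : ∀ u ∈ S, u ∈ bag b := by
          intro u hu
          by_contra hub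
          obtain ⟨k, hk1, hk2⟩ := hpair u (Finset.mem_insert_of_mem hu) a
            (Finset.mem_insert_self a S)
          obtain ⟨qu, hqu⟩ := walk_in_set T (hconn u (Finset.mem_insert_of_mem hu))
            (show i ∈ {i' | u ∈ bag i'} from hi u hu) hk1
          obtain ⟨r, hr⟩ := walk_in_set T haconn hk2 hj
          have h1 : s(i, b) ∉ qu.edges := fun h' =>
            hub (hqu b (qu.snd_mem_support_of_mem_edges h'))
          have h2 : s(i, b) ∉ r.edges := fun h' =>
            hia (hr i (r.fst_mem_support_of_mem_edges h'))
          have := tree_edge hT hadj ((qu.append r).append q.reverse)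
          rw [SimpleGraph.Walk.edges_append, SimpleGraph.Walk.edges_append,
            SimpleGraph.Walk.edges_reverse] at this
          simp only [List.mem_append, List.mem_reverse] at this
          tauto
        have : sInf W ≤ q.length := Nat.sInf_le ⟨b, j, q, hub, hj, rfl⟩
        simp only [SimpleGraph.Walk.length_cons] at hlen
        omega
/-- `v` is simplicial within `s`: its neighbors in `s` are pairwise adjacent. -/
def SimpIn (G : SimpleGraph V) (s : Finset V) (v : V) : Prop :=
  v ∈ s ∧ ∀ x ∈ s, ∀ y ∈ s, G.Adj v x → G.Adj v y → x ≠ y → G.Adj x y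

/-- `S` separates `a` from `b` inside `s`. -/
def SepIn (G : SimpleGraph V) (s : Finset V) (a b : V) (S : Finset V) : Prop :=
  S ⊆ s ∧ a ∉ S ∧ b ∉ S ∧
    ∀ p : G.Walk a b, (∀ x ∈ p.support, x ∈ s) → ∃ x ∈ p.support, x ∈ S

/-- `z` is in the connected component of `a` in `s \ S`. -/
def InComp (G : SimpleGraph V) (s S : Finset V) (a z : V) : Prop :=
  ∃ p : G.Walk a z, ∀ x ∈ p.support, x ∈ s ∧ x ∉ S

lemma sep_symm {G : SimpleGraph V} {s : Finset V} {a b : V} {S : Finset V}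
    (h : SepIn G s a b S) : SepIn G s b a S := by
  obtain ⟨h1, h2, h3, h4⟩ := h
  refine ⟨h1, h3, h2, fun p hp => ?_⟩
  obtain ⟨x, hx1, hx2⟩ := h4 p.reverse (by
    intro x hx; rw [SimpleGraph.Walk.support_reverse, List.mem_reverse] at hx; exact hp x hx)
  rw [SimpleGraph.Walk.support_reverse, List.mem_reverse] at hx1
  exact ⟨x, hx1, hx2⟩

lemma sep_exists [DecidableEq V] {G : SimpleGraph V} {s : Finset V} {a b : V}
    (hab : a ≠ b) (hnadj : ¬G.Adj a b) :
    SepIn G s a b ((s.erase a).erase b) := by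
  refine ⟨Finset.Subset.trans (Finset.erase_subset _ _) (Finset.erase_subset _ _),
    ?_, ?_, ?_⟩
  · intro h
    exact absurd (Finset.mem_erase.mp (Finset.mem_of_mem_erase h)).1 (by simp)
  · intro h
    exact absurd (Finset.mem_erase.mp h).1 (by simp)
  · intro p hp
    cases p with
    | nil => exact absurd rfl hab
    | @cons _ c _ h q =>
      have hc : c ∈ (SimpleGraph.Walk.cons h q).support := by
        rw [SimpleGraph.Walk.support_cons]; exact List.mem_cons_of_mem _ q.start_mem_support
      refine ⟨c, hc, ?_⟩
      have hca : c ≠ a := (h.ne).symm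
      have hcb : c ≠ b := fun h' => hnadj (h' ▸ h)
      exact Finset.mem_erase.mpr ⟨hcb, Finset.mem_erase.mpr ⟨hca, hp c hc⟩⟩

lemma incomp_self {G : SimpleGraph V} {s S : Finset V} {a : V} (ha : a ∈ s) (haS : a ∉ S) :
    InComp G s S a a :=
  ⟨SimpleGraph.Walk.nil, by simp [ha, haS]⟩

lemma incomp_mem {G : SimpleGraph V} {s S : Finset V} {a z : V}
    (h : InComp G s S a z) : z ∈ s ∧ z ∉ S := by
  obtain ⟨p, hp⟩ := h
  exact hp z p.end_mem_support

lemma incomp_prefix {G : SimpleGraph V} {s S : Finset V} {a u : V}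
    (h : InComp G s S a u) :
    ∃ p : G.Walk a u, ∀ z ∈ p.support, InComp G s S a z := by
  classical
  obtain ⟨p, hp⟩ := h
  refine ⟨p, fun z hz => ⟨p.takeUntil z hz, fun x hx => hp x (p.support_takeUntil_subset hz hx)⟩⟩

lemma incomp_step {G : SimpleGraph V} {s S : Finset V} {a u w : V}
    (h : InComp G s S a u) (hadj : G.Adj u w) (hw : w ∈ s) (hwS : w ∉ S) :
    InComp G s S a w := by
  obtain ⟨p, hp⟩ := h
  refine ⟨p.append (SimpleGraph.Walk.cons hadj SimpleGraph.Walk.nil), fun x hx => ?_⟩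
  rw [SimpleGraph.Walk.mem_support_append_iff] at hx
  rcases hx with hx | hx
  · exact hp x hx
  · simp only [SimpleGraph.Walk.support_cons, SimpleGraph.Walk.support_nil,
      List.mem_cons, List.mem_singleton, List.not_mem_nil, or_false] at hx
    rcases hx with hx | hx
    · exact hx ▸ hp u p.end_mem_support
    · exact hx ▸ ⟨hw, hwS⟩

lemma sep_not_both {G : SimpleGraph V} {s : Finset V} {a b : V} {S : Finset V}
    (hsep : SepIn G s a b S) {z : V} (hza : InComp G s S a z) (hzb : InComp G s S b z) :
    False := by
  obtain ⟨p, hp⟩ := hza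
  obtain ⟨q, hq⟩ := hzb
  obtain ⟨x, hx1, hx2⟩ := hsep.2.2.2 (p.append q.reverse) (by
    intro x hx
    rw [SimpleGraph.Walk.mem_support_append_iff] at hx
    rcases hx with hx | hx
    · exact (hp x hx).1
    · rw [SimpleGraph.Walk.support_reverse, List.mem_reverse] at hx
      exact (hq x hx).1)
  rw [SimpleGraph.Walk.mem_support_append_iff] at hx1
  rcases hx1 with hx | hx
  · exact (hp x hx).2 hx2
  · rw [SimpleGraph.Walk.support_reverse, List.mem_reverse] at hx
    exact (hq x hx).2 hx2
lemma min_sep_neighbor [DecidableEq V] {G : SimpleGraph V} {s : Finset V} {a b : V}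
    {S : Finset V} (hsep : SepIn G s a b S)
    (hmin : ∀ S' : Finset V, SepIn G s a b S' → S.card ≤ S'.card)
    {x : V} (hx : x ∈ S) :
    ∃ u, InComp G s S a u ∧ G.Adj x u := by
  have hnot : ¬ SepIn G s a b (S.erase x) := by
    intro h
    have := hmin _ h
    have := Finset.card_erase_lt_of_mem hx
    omega
  rw [SepIn] at hnot
  push_neg at hnot
  obtain ⟨p, hps, hpe⟩ := hnot (Finset.Subset.trans (Finset.erase_subset _ _) hsep.1)
    (fun h => hsep.2.1 (Finset.mem_of_mem_erase h))
    (fun h => hsep.2.2.1 (Finset.mem_of_mem_erase h))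
  -- every vertex of p avoiding S.erase x; p hits S at x
  obtain ⟨z, hz1, hz2⟩ := hsep.2.2.2 p hps
  have hzx : z = x := by
    by_contra hzx
    exact hpe z hz1 (Finset.mem_erase.mpr ⟨hzx, hz2⟩)
  subst hzx
  -- take the walk until (the first occurrence of) z
  set q := p.takeUntil z hz1 with hq
  have hcount : q.support.count z = 1 := p.count_support_takeUntil_eq_one hz1
  cases hrev : q.reverse with
  | nil =>
    -- q.reverse is nil, so z = a
    exfalso
    have hlen0 : q.length = 0 := by
      have := congrArg SimpleGraph.Walk.length hrev
      simpa using this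
    exact hsep.2.1 ((SimpleGraph.Walk.eq_of_length_eq_zero hlen0) ▸ hz2)
  | @cons _ c _ h' r =>
    -- h' : G.Adj z c, r : G.Walk c a
    have hsupp : q.support.reverse = z :: r.support := by
      rw [← SimpleGraph.Walk.support_reverse, hrev, SimpleGraph.Walk.support_cons]
    have hzr : z ∉ r.support := by
      intro hzr
      have h1 : q.support.reverse.count z = q.support.count z := List.count_reverse ..
      rw [hsupp] at h1
      have h2 : 0 < r.support.count z := List.count_pos_iff.mpr hzr
      simp only [List.count_cons_self] at h1
      omega
    have hrsub : ∀ w ∈ r.support, w ∈ q.support := by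
      intro w hw
      rw [← List.mem_reverse, hsupp]
      exact List.mem_cons_of_mem _ hw
    refine ⟨c, ⟨r.reverse, ?_⟩, h'⟩
    intro w hw
    rw [SimpleGraph.Walk.support_reverse, List.mem_reverse] at hw
    have hwq := hrsub w hw
    have hwp := p.support_takeUntil_subset hz1 hwq
    refine ⟨hps w hwp, fun hwS => ?_⟩
    have hwz : w ≠ z := fun h'' => hzr (h'' ▸ hw)
    exact hpe w hwp (Finset.mem_erase.mpr ⟨hwz, hwS⟩)
lemma exists_min_path {G : SimpleGraph V} {x y : V} (P : V → Prop)
    (hne : ∃ p : G.Walk x y, ∀ z ∈ p.support, P z) :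
    ∃ p : G.Walk x y, p.IsPath ∧ (∀ z ∈ p.support, P z) ∧
      ∀ q : G.Walk x y, (∀ z ∈ q.support, P z) → p.length ≤ q.length := by
  classical
  set W : Set ℕ := {n | ∃ p : G.Walk x y, (∀ z ∈ p.support, P z) ∧ p.length = n} with hW
  have hWne : W.Nonempty := by obtain ⟨p, hp⟩ := hne; exact ⟨p.length, p, hp, rfl⟩
  obtain ⟨p0, hp0, hlen⟩ := Nat.sInf_mem hWne
  refine ⟨p0.bypass, p0.bypass_isPath, fun z hz => hp0 z (p0.support_bypass_subset hz), ?_⟩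
  intro q hq
  calc p0.bypass.length ≤ p0.length := p0.length_bypass_le
  _ = sInf W := hlen
  _ ≤ q.length := Nat.sInf_le ⟨q, hq, rfl⟩

lemma adj_of_length_le_one {G : SimpleGraph V} {x y : V} (p : G.Walk x y)
    (hxy : x ≠ y) (h : p.length ≤ 1) : G.Adj x y := by
  cases p with
  | nil => exact absurd rfl hxy
  | cons h' q =>
    cases q with
    | nil => exact h'
    | cons h'' q' => simp [SimpleGraph.Walk.length_cons] at h

lemma min_sep_clique [DecidableEq V] {G : SimpleGraph V} (hG : Chordal G) {s : Finset V}
    {a b : V} {S : Finset V} (hsep : SepIn G s a b S)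
    (hmin : ∀ S' : Finset V, SepIn G s a b S' → S.card ≤ S'.card)
    {x y : V} (hx : x ∈ S) (hy : y ∈ S) (hxy : x ≠ y) : G.Adj x y := by
  have hsepb := sep_symm hsep
  have hminb : ∀ S' : Finset V, SepIn G s b a S' → S.card ≤ S'.card :=
    fun S' h => hmin S' (sep_symm h)
  -- x and y are not in either component
  have hxA : ¬ InComp G s S a x := fun h' => (incomp_mem h').2 hx
  have hyA : ¬ InComp G s S a y := fun h' => (incomp_mem h').2 hy
  have hxB : ¬ InComp G s S b x := fun h' => (incomp_mem h').2 hx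
  have hyB : ¬ InComp G s S b y := fun h' => (incomp_mem h').2 hy
  -- construct walks through each component
  have hconstruct : ∀ c c' : V, SepIn G s c c' S →
      (∀ S' : Finset V, SepIn G s c c' S' → S.card ≤ S'.card) →
      ∃ p : G.Walk x y, ∀ z ∈ p.support, z = x ∨ z = y ∨ InComp G s S c z := by
    intro c c' hsepc hminc
    obtain ⟨ux, hux, haux⟩ := min_sep_neighbor hsepc hminc hx
    obtain ⟨uy, huy, hauy⟩ := min_sep_neighbor hsepc hminc hy
    obtain ⟨pux, hpux⟩ := incomp_prefix hux
    obtain ⟨puy, hpuy⟩ := incomp_prefix huy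
    refine ⟨SimpleGraph.Walk.cons haux ((pux.reverse.append puy).append
      (SimpleGraph.Walk.cons hauy.symm SimpleGraph.Walk.nil)), ?_⟩
    intro z hz
    rw [SimpleGraph.Walk.support_cons, List.mem_cons] at hz
    rcases hz with rfl | hz
    · left; rfl
    rw [SimpleGraph.Walk.mem_support_append_iff] at hz
    rcases hz with hz | hz
    · rw [SimpleGraph.Walk.mem_support_append_iff] at hz
      right; right
      rcases hz with hz | hz
      · rw [SimpleGraph.Walk.support_reverse, List.mem_reverse] at hz; exact hpux z hz
      · exact hpuy z hz
    · simp only [SimpleGraph.Walk.support_cons, SimpleGraph.Walk.support_nil, List.mem_cons,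
        List.mem_singleton, List.not_mem_nil, or_false] at hz
      rcases hz with rfl | rfl
      · right; right; exact huy
      · right; left; rfl
  have hWA := hconstruct a b hsep hmin
  have hWB := hconstruct b a hsepb hminb
  obtain ⟨p1, hp1path, hp1s, hp1min⟩ := exists_min_path _ hWA
  obtain ⟨p2, hp2path, hp2s, hp2min⟩ := exists_min_path _ hWB
  -- If either is short, we get the adjacency directly.
  by_cases hd1 : p1.length ≤ 1
  · exact adj_of_length_le_one p1 hxy hd1
  by_cases hd2 : p2.length ≤ 1
  · exact adj_of_length_le_one p2 hxy hd2
  push_neg at hd1 hd2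
  by_contra hadj
  -- destruct p1
  cases hp1 : p1 with
  | nil => rw [hp1] at hd1; simp at hd1
  | @cons _ c1 _ h q =>
    rw [hp1] at hp1path hp1s hp1min hd1
    clear hp1 hWA hWB hconstruct
    have hsupp1 : (SimpleGraph.Walk.cons h q).support = x :: q.support :=
      SimpleGraph.Walk.support_cons _ _
    have hnodup1 : (x :: q.support).Nodup := by
      rw [← hsupp1]; exact hp1path.support_nodup
    have hxq : x ∉ q.support := (List.nodup_cons.mp hnodup1).1
    have hqnodup : q.support.Nodup := (List.nodup_cons.mp hnodup1).2
    have hqpath : q.IsPath := hp1path.of_cons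
    have hc1y : c1 ≠ y := by
      intro h'
      subst h'
      have := (SimpleGraph.Walk.isPath_iff_eq_nil (p := q)).mp hqpath
      rw [this] at hd1
      simp at hd1
    have hc1x : c1 ≠ x := fun h' => hxq (h' ▸ q.start_mem_support)
    have hc1A : InComp G s S a c1 := by
      have := hp1s c1 (by rw [hsupp1]; exact List.mem_cons_of_mem _ q.start_mem_support)
      rcases this with h' | h' | h'
      · exact absurd h' hc1x
      · exact absurd h' hc1y
      · exact h'
    have hyrevtail : ∀ z ∈ p2.reverse.support.tail, z ∈ p2.support ∧ z ≠ y := by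
      intro z hz
      constructor
      · rw [← List.mem_reverse, ← SimpleGraph.Walk.support_reverse]
        exact List.mem_of_mem_tail hz
      · intro h'
        subst h'
        have hrn : p2.reverse.support.Nodup := hp2path.reverse.support_nodup
        rw [p2.reverse.support_eq_cons] at hrn
        exact (List.nodup_cons.mp hrn).1 hz
    -- the walk q.append p2.reverse is a path
    have hqp2path : (q.append p2.reverse).IsPath := by
      rw [SimpleGraph.Walk.isPath_def, SimpleGraph.Walk.support_append, List.nodup_append]
      refine ⟨hqnodup, ?_, ?_⟩
      · exact hp2path.reverse.support_nodup.sublist (List.tail_sublist _)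
      · intro z hzq z' hzt hzz'
        rw [← hzz'] at hzt
        obtain ⟨hzp2, hzy⟩ := hyrevtail z hzt
        have hz1 := hp1s z (by rw [hsupp1]; exact List.mem_cons_of_mem _ hzq)
        have hzx : z ≠ x := fun h' => hxq (h' ▸ hzq)
        rcases hz1 with h' | h' | h'
        · exact hzx h'
        · exact hzy h'
        · rcases hp2s z hzp2 with h'' | h'' | h''
          · exact hzx h''
          · exact hzy h''
          · exact sep_not_both hsep h' h''
    have hedge : s(x, c1) ∉ (q.append p2.reverse).edges := by
      rw [SimpleGraph.Walk.edges_append, List.mem_append]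
      rintro (h' | h')
      · exact hxq (q.fst_mem_support_of_mem_edges h')
      · have hc1p2 : c1 ∈ p2.support := by
          have := p2.reverse.snd_mem_support_of_mem_edges h'
          rw [SimpleGraph.Walk.support_reverse, List.mem_reverse] at this
          exact this
        rcases hp2s c1 hc1p2 with h'' | h'' | h''
        · exact hc1x h''
        · exact hc1y h''
        · exact sep_not_both hsep hc1A h''
    have hcyc : (SimpleGraph.Walk.cons h (q.append p2.reverse)).IsCycle :=
      (SimpleGraph.Walk.cons_isCycle_iff _ h).mpr ⟨hqp2path, hedge⟩
    have hlen4 : 4 ≤ (SimpleGraph.Walk.cons h (q.append p2.reverse)).length := by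
      rw [SimpleGraph.Walk.length_cons, SimpleGraph.Walk.length_append]
      rw [SimpleGraph.Walk.length_cons] at hd1
      rw [SimpleGraph.Walk.length_reverse]
      omega
    obtain ⟨u, w, hu, hw, hauw, hne⟩ := hG x _ hcyc hlen4
    -- classify chord endpoints
    have hclass : ∀ z, z ∈ (SimpleGraph.Walk.cons h (q.append p2.reverse)).support →
        z ∈ (SimpleGraph.Walk.cons h q).support ∨ z ∈ p2.support := by
      intro z hz
      rw [SimpleGraph.Walk.support_cons, List.mem_cons] at hz
      rcases hz with rfl | hz
      · left; rw [hsupp1]; exact List.mem_cons_self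
      rw [SimpleGraph.Walk.mem_support_append_iff] at hz
      rcases hz with hz | hz
      · left; rw [hsupp1]; exact List.mem_cons_of_mem _ hz
      · right; rw [← List.mem_reverse, ← SimpleGraph.Walk.support_reverse]; exact hz
    have hne1 : s(u, w) ∉ (SimpleGraph.Walk.cons h q).edges := by
      intro h'
      apply hne
      rw [SimpleGraph.Walk.edges_cons] at h' ⊢
      rw [List.mem_cons] at h' ⊢
      rcases h' with h' | h'
      · exact Or.inl h'
      · right; rw [SimpleGraph.Walk.edges_append, List.mem_append]; exact Or.inl h'
    have hne2 : s(u, w) ∉ p2.edges := by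
      intro h'
      apply hne
      rw [SimpleGraph.Walk.edges_cons, List.mem_cons]
      right
      rw [SimpleGraph.Walk.edges_append, List.mem_append, SimpleGraph.Walk.edges_reverse,
        List.mem_reverse]
      exact Or.inr h'
    -- component membership helper
    have hmemA : ∀ z, z ∈ (SimpleGraph.Walk.cons h q).support → z ∉ p2.support →
        InComp G s S a z := by
      intro z hz hz2
      rcases hp1s z hz with h' | h' | h'
      · exact absurd (h' ▸ p2.start_mem_support) hz2
      · exact absurd (h' ▸ p2.end_mem_support) hz2
      · exact h'
    have hmemB : ∀ z, z ∈ p2.support → z ∉ (SimpleGraph.Walk.cons h q).support →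
        InComp G s S b z := by
      intro z hz hz1
      rcases hp2s z hz with h' | h' | h'
      · exact absurd (h' ▸ (SimpleGraph.Walk.cons h q).start_mem_support) hz1
      · exact absurd (h' ▸ (SimpleGraph.Walk.cons h q).end_mem_support) hz1
      · exact h'
    -- now the case analysis
    have hfin : False := by
      rcases hclass u hu with hu' | hu' <;> rcases hclass w hw with hw' | hw'
      · obtain ⟨q', hq's, hq'len⟩ := exists_shorter _ hu' hw' hauw hne1
        have := hp1min q' (fun z hz => hp1s z (hq's z hz))
        omega
      · by_cases hwp1 : w ∈ (SimpleGraph.Walk.cons h q).support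
        · obtain ⟨q', hq's, hq'len⟩ := exists_shorter _ hu' hwp1 hauw hne1
          have := hp1min q' (fun z hz => hp1s z (hq's z hz))
          omega
        · by_cases hup2 : u ∈ p2.support
          · obtain ⟨q', hq's, hq'len⟩ := exists_shorter _ hup2 hw' hauw hne2
            have := hp2min q' (fun z hz => hp2s z (hq's z hz))
            omega
          · have hA := hmemA u hu' hup2
            have hB := hmemB w hw' hwp1
            exact sep_not_both hsep (incomp_step hA hauw (incomp_mem hB).1 (incomp_mem hB).2) hB
      · by_cases hup1 : u ∈ (SimpleGraph.Walk.cons h q).support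
        · obtain ⟨q', hq's, hq'len⟩ := exists_shorter _ hup1 hw' hauw hne1
          have := hp1min q' (fun z hz => hp1s z (hq's z hz))
          omega
        · by_cases hwp2 : w ∈ p2.support
          · obtain ⟨q', hq's, hq'len⟩ := exists_shorter _ hu' hwp2 hauw hne2
            have := hp2min q' (fun z hz => hp2s z (hq's z hz))
            omega
          · have hB := hmemB u hu' hup1
            have hA := hmemA w hw' hwp2
            exact sep_not_both hsep (incomp_step hA hauw.symm (incomp_mem hB).1 (incomp_mem hB).2) hB
      · obtain ⟨q', hq's, hq'len⟩ := exists_shorter _ hu' hw' hauw hne2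
        have := hp2min q' (fun z hz => hp2s z (hq's z hz))
        omega
    exact hfin
lemma find_side {G : SimpleGraph V} {s : Finset V} {a b : V} {S : Finset V}
    (hsep : SepIn G s a b S)
    (hmin : ∀ S' : Finset V, SepIn G s a b S' → S.card ≤ S'.card)
    (hclique : ∀ x ∈ S, ∀ y ∈ S, x ≠ y → G.Adj x y)
    (hSs : ∀ u, InComp G s S a u → u ∈ s)
    (ha : a ∈ s) (haS : a ∉ S)
    (Hrec : ∀ s' : Finset V, s'.card < s.card → s'.Nonempty →
      ((∀ x ∈ s', ∀ y ∈ s', x ≠ y → G.Adj x y) ∨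
       (∃ v w, SimpIn G s' v ∧ SimpIn G s' w ∧ v ≠ w ∧ ¬G.Adj v w)))
    (hb : b ∈ s) :
    ∃ v, InComp G s S a v ∧ SimpIn G s v := by
  classical
  set s₁ : Finset V := s.filter (fun z => InComp G s S a z) ∪ S with hs₁
  have hs₁sub : s₁ ⊆ s := by
    intro z hz
    rw [hs₁, Finset.mem_union] at hz
    rcases hz with hz | hz
    · exact (Finset.mem_filter.mp hz).1
    · exact hsep.1 hz
  have hbs₁ : b ∉ s₁ := by
    rw [hs₁, Finset.mem_union]
    rintro (hz | hz)
    · exact sep_not_both hsep (Finset.mem_filter.mp hz).2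
        (incomp_self hb hsep.2.2.1)
    · exact hsep.2.2.1 hz
  have hcard : s₁.card < s.card :=
    Finset.card_lt_card (Finset.ssubset_iff_of_subset hs₁sub |>.mpr ⟨b, hb, hbs₁⟩)
  have has₁ : a ∈ s₁ := by
    rw [hs₁, Finset.mem_union]
    exact Or.inl (Finset.mem_filter.mpr ⟨ha, incomp_self ha haS⟩)
  -- membership closure: every s-neighbor of a component vertex lies in s₁
  have hclosure : ∀ v, InComp G s S a v → ∀ z ∈ s, G.Adj v z → z ∈ s₁ := by
    intro v hv z hzs hadj
    rw [hs₁, Finset.mem_union]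
    by_cases hzS : z ∈ S
    · exact Or.inr hzS
    · exact Or.inl (Finset.mem_filter.mpr ⟨hzs, incomp_step hv hadj hzs hzS⟩)
  have hsimp_lift : ∀ v, InComp G s S a v → SimpIn G s₁ v → SimpIn G s v := by
    intro v hv hsv
    refine ⟨hSs v hv, fun p hp r hr hvp hvr hpr => ?_⟩
    exact hsv.2 p (hclosure v hv p hp hvp) r (hclosure v hv r hr hvr) hvp hvr hpr
  rcases Hrec s₁ hcard ⟨a, has₁⟩ with hcomp | ⟨v, w, hv, hw, hvw, hnadj⟩
  · -- s₁ complete: a is simplicial in s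
    refine ⟨a, incomp_self ha haS, hsimp_lift a (incomp_self ha haS)
      ⟨has₁, fun p hp r hr hap har hpr => hcomp p hp r hr hpr⟩⟩
  · -- two nonadjacent simplicial vertices in s₁; one is in the component of a
    have hnotboth : ¬ (v ∈ S ∧ w ∈ S) := fun ⟨h1, h2⟩ => hnadj (hclique v h1 w h2 hvw)
    have hpick : ∃ v', InComp G s S a v' ∧ SimpIn G s₁ v' := by
      by_cases hvS : v ∈ S
      · have hwS : w ∉ S := fun h' => hnotboth ⟨hvS, h'⟩
        have hw1 : w ∈ s₁ := hw.1
        rw [hs₁, Finset.mem_union] at hw1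
        rcases hw1 with hw1 | hw1
        · exact ⟨w, (Finset.mem_filter.mp hw1).2, hw⟩
        · exact absurd hw1 hwS
      · have hv1 : v ∈ s₁ := hv.1
        rw [hs₁, Finset.mem_union] at hv1
        rcases hv1 with hv1 | hv1
        · exact ⟨v, (Finset.mem_filter.mp hv1).2, hv⟩
        · exact absurd hv1 hvS
    obtain ⟨v', hv'c, hv's⟩ := hpick
    exact ⟨v', hv'c, hsimp_lift v' hv'c hv's⟩

lemma dirac {G : SimpleGraph V} (hG : Chordal G) :
    ∀ (n : ℕ) (s : Finset V), s.card ≤ n → s.Nonempty →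
    ((∀ x ∈ s, ∀ y ∈ s, x ≠ y → G.Adj x y) ∨
     (∃ v w, SimpIn G s v ∧ SimpIn G s w ∧ v ≠ w ∧ ¬G.Adj v w)) := by
  classical
  intro n
  induction n with
  | zero => intro s hs hne; obtain ⟨z, hz⟩ := hne
            exact absurd (Finset.card_pos.mpr ⟨z, hz⟩) (by omega)
  | succ n IH =>
    intro s hs hne
    by_cases hcomp : ∀ x ∈ s, ∀ y ∈ s, x ≠ y → G.Adj x y
    · exact Or.inl hcomp
    push_neg at hcomp
    obtain ⟨a, ha, b, hb, hab, hnadj⟩ := hcomp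
    -- minimum cardinality separator
    set M : Set ℕ := {m | ∃ S : Finset V, SepIn G s a b S ∧ S.card = m} with hM
    have hMne : M.Nonempty := ⟨_, _, sep_exists hab hnadj, rfl⟩
    obtain ⟨S, hsep, hScard⟩ := Nat.sInf_mem hMne
    have hmin : ∀ S' : Finset V, SepIn G s a b S' → S.card ≤ S'.card := by
      intro S' h
      rw [hScard]
      exact Nat.sInf_le ⟨S', h, rfl⟩
    have hsepb := sep_symm hsep
    have hminb : ∀ S' : Finset V, SepIn G s b a S' → S.card ≤ S'.card :=
      fun S' h => hmin S' (sep_symm h)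
    have hclique : ∀ x ∈ S, ∀ y ∈ S, x ≠ y → G.Adj x y :=
      fun x hx y hy hxy => min_sep_clique hG hsep hmin hx hy hxy
    have Hrec : ∀ s' : Finset V, s'.card < s.card → s'.Nonempty →
        ((∀ x ∈ s', ∀ y ∈ s', x ≠ y → G.Adj x y) ∨
         (∃ v w, SimpIn G s' v ∧ SimpIn G s' w ∧ v ≠ w ∧ ¬G.Adj v w)) := by
      intro s' hlt hne'
      exact IH s' (by omega) hne'
    obtain ⟨vA, hvAc, hvAs⟩ := find_side hsep hmin hclique
      (fun u hu => (incomp_mem hu).1) ha hsep.2.1 Hrec hb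
    obtain ⟨vB, hvBc, hvBs⟩ := find_side hsepb hminb hclique
      (fun u hu => (incomp_mem hu).1) hb hsep.2.2.1 Hrec ha
    refine Or.inr ⟨vA, vB, hvAs, hvBs, ?_, ?_⟩
    · intro h'
      exact sep_not_both hsep hvAc (h' ▸ hvBc)
    · intro h'
      exact sep_not_both hsep
        (incomp_step hvAc h' (incomp_mem hvBc).1 (incomp_mem hvBc).2) hvBc

/-- Every finite chordal graph has a simplicial vertex in every nonempty vertex subset. -/
lemma exists_simplicial {G : SimpleGraph V} (hG : Chordal G) {s : Finset V}
    (hne : s.Nonempty) : ∃ v, SimpIn G s v := by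
  rcases dirac hG s.card s le_rfl hne with hcomp | ⟨v, _, hv, _⟩
  · obtain ⟨z, hz⟩ := hne
    exact ⟨z, hz, fun x hx y hy _ _ hxy => hcomp x hx y hy hxy⟩
  · exact ⟨v, hv⟩
/-- Attach a new leaf (the `none` vertex) to node `i₀` of `T`. -/
def addLeaf (T : SimpleGraph ι) (i₀ : ι) : SimpleGraph (Option ι) where
  Adj x y := match x, y with
    | some a, some b => T.Adj a b
    | some a, none => a = i₀
    | none, some b => b = i₀
    | none, none => False
  symm := by
    exact ⟨by rintro (_ | a) (_ | b) h <;> simp_all <;> exact h.symm⟩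
  loopless := by
    refine ⟨?_⟩
    rintro (_ | a) h
    · exact h
    · exact T.irrefl h

lemma addLeaf_adj_some {T : SimpleGraph ι} {i₀ : ι} {a b : ι} :
    (addLeaf T i₀).Adj (some a) (some b) ↔ T.Adj a b := Iff.rfl

lemma addLeaf_adj_none {T : SimpleGraph ι} {i₀ : ι} {b : ι} :
    (addLeaf T i₀).Adj none (some b) ↔ b = i₀ := Iff.rfl

lemma addLeaf_adj_none' {T : SimpleGraph ι} {i₀ : ι} {a : ι} :
    (addLeaf T i₀).Adj (some a) none ↔ a = i₀ := Iff.rfl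

/-- Project a walk between `some` vertices in `addLeaf T i₀` to a walk in `T`,
preserving (images of) edges. -/
lemma addLeaf_proj {T : SimpleGraph ι} {i₀ : ι} :
    ∀ (n : ℕ) {x y : ι} (p : (addLeaf T i₀).Walk (some x) (some y)), p.length ≤ n →
    ∃ q : T.Walk x y, ∀ a b : ι, s(a, b) ∈ q.edges → s(some a, some b) ∈ p.edges := by
  intro n
  induction n with
  | zero =>
    intro x y p hp
    cases p with
    | nil => exact ⟨SimpleGraph.Walk.nil, by simp⟩
    | cons h q => simp at hp
  | succ n IH =>
    intro x y p hp
    cases p with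
    | nil => exact ⟨SimpleGraph.Walk.nil, by simp⟩
    | @cons _ z _ h r =>
      cases z with
      | some z' =>
        obtain ⟨q, hq⟩ := IH r (by simp only [SimpleGraph.Walk.length_cons] at hp; omega)
        refine ⟨SimpleGraph.Walk.cons (addLeaf_adj_some.mp h) q, ?_⟩
        intro a b hab
        rw [SimpleGraph.Walk.edges_cons, List.mem_cons] at hab ⊢
        rcases hab with hab | hab
        · left
          rcases Sym2.eq_iff.mp hab with ⟨rfl, rfl⟩ | ⟨rfl, rfl⟩
          · rfl
          · exact Sym2.eq_swap
        · exact Or.inr (hq a b hab)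
      | none =>
        have hx : x = i₀ := addLeaf_adj_none'.mp h
        cases r with
        | @cons _ z2 _ h2 r2 =>
          cases z2 with
          | some z2' =>
            have hz2 : z2' = i₀ := addLeaf_adj_none.mp h2
            have hxz : (some z2' : Option ι) = some x := by rw [hz2, hx]
            obtain ⟨q, hq⟩ := IH (r2.copy hxz rfl)
              (by simp only [SimpleGraph.Walk.length_copy, SimpleGraph.Walk.length_cons] at hp ⊢
                  omega)
            refine ⟨q, fun a b hab => ?_⟩
            have := hq a b hab
            rw [SimpleGraph.Walk.edges_copy] at this
            rw [SimpleGraph.Walk.edges_cons, SimpleGraph.Walk.edges_cons]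
            exact List.mem_cons_of_mem _ (List.mem_cons_of_mem _ this)
          | none => exact absurd h2 (fun h' => h')
/-- The embedding of `T` into `addLeaf T i₀`. -/
def someHom (T : SimpleGraph ι) (i₀ : ι) : T →g addLeaf T i₀ where
  toFun := some
  map_rel' := fun h => h

lemma addLeaf_first_edge {T : SimpleGraph ι} {i₀ : ι} {b : ι}
    (p : (addLeaf T i₀).Walk none (some b)) : s(none, some i₀) ∈ p.edges := by
  cases p with
  | @cons _ z _ h r =>
    cases z with
    | some z' =>
      have hz : z' = i₀ := addLeaf_adj_none.mp h
      subst hz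
      rw [SimpleGraph.Walk.edges_cons]
      exact List.mem_cons_self
    | none => exact absurd h (fun h' => h')

lemma addLeaf_isTree {T : SimpleGraph ι} (hT : T.IsTree) (i₀ : ι) :
    (addLeaf T i₀).IsTree := by
  constructor
  · -- connected
    have hre : ∀ y : ι, (addLeaf T i₀).Reachable (some i₀) (some y) := by
      intro y
      obtain ⟨p⟩ := hT.isConnected.preconnected i₀ y
      exact ⟨p.map (someHom T i₀)⟩
    constructor
    intro u v
    have key : ∀ w : Option ι, (addLeaf T i₀).Reachable (some i₀) w := by
      rintro (_ | w)
      · exact (SimpleGraph.Adj.reachable (by exact rfl : (addLeaf T i₀).Adj (some i₀) none))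
      · exact hre w
    exact (key u).symm.trans (key v)
  · -- acyclic
    rw [SimpleGraph.isAcyclic_iff_forall_adj_isBridge]
    rintro (_ | a) (_ | b) hadj
    · exact absurd hadj (fun h' => h')
    · -- none, some b with b = i₀
      have hb : b = i₀ := addLeaf_adj_none.mp hadj
      subst hb
      rw [SimpleGraph.isBridge_iff_adj_and_forall_walk_mem_edges]
      exact fun p => addLeaf_first_edge p
    · -- some a, none with a = i₀
      have ha : a = i₀ := addLeaf_adj_none'.mp hadj
      subst ha
      rw [SimpleGraph.isBridge_iff_adj_and_forall_walk_mem_edges]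
      refine fun p => ?_
      have := addLeaf_first_edge p.reverse
      rw [SimpleGraph.Walk.edges_reverse, List.mem_reverse] at this
      rwa [Sym2.eq_swap] at this
    · -- some a, some b
      rw [SimpleGraph.isBridge_iff_adj_and_forall_walk_mem_edges]
      refine fun p => ?_
      obtain ⟨q, hq⟩ := addLeaf_proj p.length p le_rfl
      exact hq a b (tree_edge hT (addLeaf_adj_some.mp hadj) q)
lemma induce_connected_of_subsingleton {W : Type} (G : SimpleGraph W) (s : Set W)
    (hne : s.Nonempty) (hsub : ∀ a ∈ s, ∀ b ∈ s, a = b) : (G.induce s).Connected := by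
  obtain ⟨x, hx⟩ := hne
  haveI : Nonempty {w // w ∈ s} := ⟨⟨x, hx⟩⟩
  refine SimpleGraph.Connected.mk (fun a b => ?_)
  have : a = b := Subtype.ext (hsub a.1 a.2 b.1 b.2)
  rw [this]

/-- Map vertices into the extended tree. -/
def intoAddLeaf (T : SimpleGraph ι) (i₀ : ι) (s : Set ι) (t : Set (Option ι))
    (hst : ∀ z ∈ s, some z ∈ t) : T.induce s →g (addLeaf T i₀).induce t where
  toFun := fun z => ⟨some z.1, hst z.1 z.2⟩
  map_rel' := fun h => h

lemma addLeaf_induce_some {T : SimpleGraph ι} {i₀ : ι} {s : Set ι}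
    (h : (T.induce s).Connected) :
    ((addLeaf T i₀).induce (some '' s)).Connected := by
  have hst : ∀ z ∈ s, some z ∈ some '' s := fun z hz => ⟨z, hz, rfl⟩
  haveI : Nonempty {o // o ∈ some '' s} := by
    obtain ⟨⟨z, hz⟩⟩ := h.nonempty
    exact ⟨⟨some z, hst z hz⟩⟩
  refine SimpleGraph.Connected.mk (fun a b => ?_)
  obtain ⟨oa, ha⟩ := a
  obtain ⟨ob, hb⟩ := b
  obtain ⟨za, hza, rfl⟩ := ha
  obtain ⟨zb, hzb, rfl⟩ := hb
  have := (h.preconnected ⟨za, hza⟩ ⟨zb, hzb⟩).map (intoAddLeaf T i₀ s (some '' s) hst)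
  convert this using 2 <;> exact Subtype.ext rfl

lemma addLeaf_induce_insert_none {T : SimpleGraph ι} {i₀ : ι} {s : Set ι}
    (h : (T.induce s).Connected) (hi₀ : i₀ ∈ s) :
    ((addLeaf T i₀).induce (insert none (some '' s))).Connected := by
  set t : Set (Option ι) := insert none (some '' s) with ht
  have hst : ∀ z ∈ s, some z ∈ t := fun z hz => Set.mem_insert_of_mem _ ⟨z, hz, rfl⟩
  have hbase : ∀ a : {o // o ∈ t}, ((addLeaf T i₀).induce t).Reachable a
      ⟨some i₀, hst i₀ hi₀⟩ := by
    rintro ⟨o, ho⟩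
    rcases ho with rfl | ⟨z, hz, rfl⟩
    · exact SimpleGraph.Adj.reachable (by exact rfl :
        ((addLeaf T i₀).induce t).Adj ⟨none, Set.mem_insert _ _⟩ ⟨some i₀, hst i₀ hi₀⟩)
    · have := (h.preconnected ⟨z, hz⟩ ⟨i₀, hi₀⟩).map (intoAddLeaf T i₀ s t hst)
      convert this using 2 <;> rfl
  haveI : Nonempty {o // o ∈ t} := ⟨⟨some i₀, hst i₀ hi₀⟩⟩
  exact SimpleGraph.Connected.mk (fun a b => (hbase a).trans (hbase b).symm)
/-- A tree decomposition of the part of `G` inside `s`, all of whose bags are cliques. -/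
def Good (G : SimpleGraph V) (s : Finset V) : Prop :=
  ∃ (ι : Type) (T : SimpleGraph ι) (bag : ι → Set V),
    T.IsTree ∧ (∀ v ∈ s, ∃ i, v ∈ bag i) ∧
    (∀ u v : V, G.Adj u v → u ∈ s → v ∈ s → ∃ i, u ∈ bag i ∧ v ∈ bag i) ∧
    (∀ v ∈ s, (T.induce {i | v ∈ bag i}).Connected) ∧
    (∀ i, G.IsClique (bag i) ∧ bag i ⊆ (↑s : Set V))

lemma good_of_chordal {G : SimpleGraph V} (hG : Chordal G) :
    ∀ (n : ℕ) (s : Finset V), s.card ≤ n → s.Nonempty → Good G s := by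
  classical
  intro n
  induction n with
  | zero =>
    intro s hs hne
    obtain ⟨z, hz⟩ := hne
    exact absurd (Finset.card_pos.mpr ⟨z, hz⟩) (by omega)
  | succ n IH =>
    intro s hs hne
    obtain ⟨v, hvs, hvsimp⟩ := exists_simplicial hG hne
    by_cases hsing : s.erase v = ∅
    · -- s = {v} : one-bag decomposition
      have hsv : ∀ u ∈ s, u = v := by
        intro u hu
        by_contra huv
        exact absurd (Finset.mem_erase.mpr ⟨huv, hu⟩) (by rw [hsing]; simp)
      refine ⟨Unit, ⊥, fun _ => {v}, ⟨?_, SimpleGraph.isAcyclic_bot⟩, ?_, ?_, ?_, ?_⟩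
      · haveI : Nonempty Unit := ⟨()⟩
        exact SimpleGraph.Connected.mk (fun a b => by rw [Subsingleton.elim a b])
      · intro u hu; exact ⟨(), by simp [hsv u hu]⟩
      · intro u w hadj hu hw
        rw [hsv u hu, hsv w hw] at hadj
        exact absurd hadj (G.irrefl)
      · intro u hu
        refine induce_connected_of_subsingleton _ _ ⟨(), by simp [hsv u hu]⟩
          (fun a _ b _ => Subsingleton.elim a b)
      · intro i
        exact ⟨(Set.pairwise_singleton v G.Adj : G.IsClique {v}), by
          intro z hz; rw [Set.mem_singleton_iff.mp hz]; exact hvs⟩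
    · have hne' : (s.erase v).Nonempty := Finset.nonempty_iff_ne_empty.mpr hsing
      have hcards : 1 ≤ s.card := Finset.card_pos.mpr hne
      have hcard' : (s.erase v).card ≤ n := by
        rw [Finset.card_erase_of_mem hvs]; omega
      obtain ⟨ι, T, bag, hTtree, hcov, hedge, hconn, hbags⟩ := IH (s.erase v) hcard' hne'
      set N : Finset V := (s.erase v).filter (fun u => G.Adj v u) with hNdef
      have hNmem : ∀ u, u ∈ N ↔ (u ∈ s ∧ u ≠ v ∧ G.Adj v u) := by
        intro u
        rw [hNdef, Finset.mem_filter, Finset.mem_erase]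
        tauto
      -- the neighborhood N is a clique, hence lies in a common bag
      obtain ⟨i₀, hi₀⟩ := helly hTtree bag N
        (fun u hu => hconn u (by rw [hNdef] at hu; exact (Finset.mem_filter.mp hu).1))
        (by
          intro u hu w hw
          rw [hNmem] at hu hw
          by_cases huw : u = w
          · subst huw
            obtain ⟨i, hi⟩ := hcov u (Finset.mem_erase.mpr ⟨hu.2.1, hu.1⟩)
            exact ⟨i, hi, hi⟩
          · exact hedge u w (hvsimp u hu.1 w hw.1 hu.2.2 hw.2.2 huw)
              (Finset.mem_erase.mpr ⟨hu.2.1, hu.1⟩) (Finset.mem_erase.mpr ⟨hw.2.1, hw.1⟩))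
      refine ⟨Option ι, addLeaf T i₀,
        (fun o => match o with | none => insert v (↑N : Set V) | some i => bag i),
        addLeaf_isTree hTtree i₀, ?_, ?_, ?_, ?_⟩
      · -- vertex coverage
        intro u hu
        by_cases huv : u = v
        · exact ⟨none, by simp [huv]⟩
        · obtain ⟨i, hi⟩ := hcov u (Finset.mem_erase.mpr ⟨huv, hu⟩)
          exact ⟨some i, hi⟩
      · -- edge coverage
        intro u w hadj hu hw
        by_cases huv : u = v
        · by_cases hwv : w = v
          · rw [huv, hwv] at hadj; exact absurd hadj (G.irrefl)
          · refine ⟨none, by simp [huv], Set.mem_insert_of_mem _ ?_⟩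
            rw [Finset.mem_coe, hNmem]
            exact ⟨hw, hwv, huv ▸ hadj⟩
        · by_cases hwv : w = v
          · refine ⟨none, Set.mem_insert_of_mem _ ?_, by simp [hwv]⟩
            rw [Finset.mem_coe, hNmem]
            exact ⟨hu, huv, (hwv ▸ hadj).symm⟩
          · obtain ⟨i, hi⟩ := hedge u w hadj (Finset.mem_erase.mpr ⟨huv, hu⟩)
              (Finset.mem_erase.mpr ⟨hwv, hw⟩)
            exact ⟨some i, hi⟩
      · -- connectivity of the subtrees
        intro u hu
        by_cases huv : u = v
        · subst huv
          have hset : {o : Option ι | u ∈ (match o with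
              | none => insert u (↑N : Set V) | some i => bag i)} = {none} := by
            ext o
            cases o with
            | none => simp
            | some i =>
              simp only [Set.mem_setOf_eq, Set.mem_singleton_iff]
              constructor
              · intro h'
                exact absurd (Finset.mem_erase.mp (hbags i |>.2 h')).1 (by simp)
              · intro h'; exact absurd h' (by simp)
          rw [hset]
          exact induce_connected_of_subsingleton _ _ ⟨none, rfl⟩
            (fun a ha b hb => by rw [Set.mem_singleton_iff.mp ha, Set.mem_singleton_iff.mp hb])
        · have huN : u ∈ N ↔ (u ∈ insert v (↑N : Set V)) := by
            constructor
            · intro h'; exact Set.mem_insert_of_mem _ h'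
            · intro h'
              rcases Set.mem_insert_iff.mp h' with h' | h'
              · exact absurd h' huv
              · exact h'
          by_cases huN' : u ∈ N
          · have hset : {o : Option ι | u ∈ (match o with
                | none => insert v (↑N : Set V) | some i => bag i)} =
                insert none (some '' {i | u ∈ bag i}) := by
              ext o
              cases o with
              | none => simp [huN.mp huN']
              | some i => simp
            rw [hset]
            exact addLeaf_induce_insert_none (hconn u (Finset.mem_erase.mpr ⟨huv, hu⟩))
              (hi₀ u huN')
          · have hset : {o : Option ι | u ∈ (match o with
                | none => insert v (↑N : Set V) | some i => bag i)} =
                some '' {i | u ∈ bag i} := by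
              ext o
              cases o with
              | none => simp only [Set.mem_setOf_eq, Set.mem_image]
                        constructor
                        · intro h'; exact absurd (huN.mpr h') huN'
                        · rintro ⟨i, _, h'⟩; exact absurd h' (by simp)
              | some i => simp
            rw [hset]
            exact addLeaf_induce_some (hconn u (Finset.mem_erase.mpr ⟨huv, hu⟩))
      · -- bags are cliques inside s
        intro o
        cases o with
        | some i =>
          refine ⟨(hbags i).1, fun z hz => ?_⟩
          have := (hbags i).2 hz
          rw [Finset.mem_coe] at this ⊢
          exact Finset.mem_of_mem_erase this
        | none =>
          constructor
          · intro p hp r hr hpr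
            rcases Set.mem_insert_iff.mp hp with rfl | hp' <;>
              rcases Set.mem_insert_iff.mp hr with h' | hr'
            · exact absurd h'.symm hpr
            · rw [Finset.mem_coe, hNmem] at hr'
              exact hr'.2.2
            · rw [Finset.mem_coe, hNmem] at hp'
              rw [h'] at hpr ⊢
              exact hp'.2.2.symm
            · rw [Finset.mem_coe, hNmem] at hp' hr'
              exact hvsimp p hp'.1 r hr'.1 hp'.2.2 hr'.2.2 hpr
          · intro z hz
            rcases Set.mem_insert_iff.mp hz with rfl | hz'
            · exact hvs
            · rw [Finset.mem_coe, hNmem] at hz'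
              exact hz'.1
end AuxChordal

/-- For every nonempty chordal graph `G`, `tw(G) = ω(G) − 1`. -/
theorem stmt_16 {V : Type} [Fintype V] [Nonempty V] (G : SimpleGraph V)
    (hG : Chordal G) : treewidth G = cliqueNumber G - 1 := by
  classical
  set K : Set ℕ := {n | ∃ S : Set V, G.IsClique S ∧ S.ncard = n} with hK
  have hKbdd : BddAbove K := by
    refine ⟨Fintype.card V, fun n hn => ?_⟩
    obtain ⟨S, _, rfl⟩ := hn
    calc S.ncard ≤ (Set.univ : Set V).ncard :=
          Set.ncard_le_ncard (Set.subset_univ S) Set.finite_univ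
    _ = Fintype.card V := by rw [Set.ncard_univ, Nat.card_eq_fintype_card]
  have h1K : (1 : ℕ) ∈ K :=
    ⟨{Classical.arbitrary V}, Set.pairwise_singleton _ _, Set.ncard_singleton _⟩
  have hKne : K.Nonempty := ⟨1, h1K⟩
  have hcn : cliqueNumber G = sSup K := rfl
  have hω1 : 1 ≤ cliqueNumber G := by rw [hcn]; exact le_csSup hKbdd h1K
  have hωK : cliqueNumber G ∈ K := by rw [hcn]; exact Nat.sSup_mem hKne hKbdd
  -- upper bound: a tree decomposition with clique bags
  obtain ⟨ι, T, bag, hTtree, hcov, hedge, hconn, hbags⟩ :=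
    good_of_chordal hG Finset.univ.card Finset.univ le_rfl
      ⟨Classical.arbitrary V, Finset.mem_univ _⟩
  have hdecomp : HasTreeDecompOfWidth G (cliqueNumber G - 1) := by
    refine ⟨ι, T, bag, ⟨hTtree, fun v => hcov v (Finset.mem_univ v),
      fun u v h => hedge u v h (Finset.mem_univ u) (Finset.mem_univ v),
      fun v => hconn v (Finset.mem_univ v)⟩, ?_⟩
    intro i
    have hmem : (bag i).ncard ∈ K := ⟨bag i, (hbags i).1, rfl⟩
    have h2 : (bag i).ncard ≤ cliqueNumber G := by rw [hcn]; exact le_csSup hKbdd hmem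
    omega
  have htw_ne : {k | HasTreeDecompOfWidth G k}.Nonempty := ⟨_, hdecomp⟩
  have hle : treewidth G ≤ cliqueNumber G - 1 := Nat.sInf_le hdecomp
  -- lower bound: every clique fits into a bag
  have htw_mem : HasTreeDecompOfWidth G (treewidth G) := Nat.sInf_mem htw_ne
  obtain ⟨ι', T', bag', ⟨hT'tree, hcov', hedge', hconn'⟩, hwidth⟩ := htw_mem
  obtain ⟨Smax, hSclique, hScard⟩ := hωK
  obtain ⟨i, hi⟩ := helly hT'tree bag' (Set.Finite.toFinset (Set.toFinite Smax))
    (fun v _ => hconn' v)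
    (by
      intro u hu w hw
      rw [Set.Finite.mem_toFinset] at hu hw
      by_cases huw : u = w
      · subst huw
        obtain ⟨i, hi⟩ := hcov' u
        exact ⟨i, hi, hi⟩
      · exact hedge' u w (hSclique hu hw huw))
  have hsub : Smax ⊆ bag' i := fun z hz => hi z (by rwa [Set.Finite.mem_toFinset])
  have hge : cliqueNumber G ≤ treewidth G + 1 := by
    calc cliqueNumber G = Smax.ncard := hScard.symm
    _ ≤ (bag' i).ncard := Set.ncard_le_ncard hsub (Set.toFinite _)
    _ ≤ treewidth G + 1 := hwidth i
  omega
end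

section
/- Let Ω be a potential maximal clique of a graph G. Then a subset S ⊆ Ω is a minimal separator of G if and only if S is the neighborhood N(C) of some connected component C of the graph G − Ω obtained by deleting Ω from G. -/
set_option linter.unusedSectionVars false

namespace BTAux
open SimpleGraph

variable {V : Type} [DecidableEq V] {G H : SimpleGraph V}


lemma support_eq_map_range {u v : V} (p : G.Walk u v) :
    p.support = (List.range (p.length + 1)).map p.getVert := by
  induction p with
  | nil => simp [Walk.getVert]
  | @cons a b c h q ih =>
    rw [Walk.support_cons, Walk.length_cons, List.range_succ_eq_map, List.map_cons, List.map_map]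
    have h0 : (Walk.cons h q).getVert 0 = a := rfl
    have h1 : (Walk.cons h q).getVert ∘ Nat.succ = q.getVert := rfl
    rw [h0, h1, ← ih]

lemma tail_support_eq_map_range {v : V} (c : G.Walk v v) :
    c.support.tail = (List.range c.length).map (fun k => c.getVert (k + 1)) := by
  rw [support_eq_map_range, List.range_succ_eq_map]
  simp [List.map_map, Function.comp]

lemma getVert_mem_support {u v : V} (p : G.Walk u v) (i : ℕ) : p.getVert i ∈ p.support := by
  rw [Walk.mem_support_iff_exists_getVert]
  rcases le_or_gt i p.length with h | h
  · exact ⟨i, rfl, h⟩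
  · exact ⟨p.length, by rw [p.getVert_of_length_le h.le, p.getVert_length], le_rfl⟩

lemma cyc_getVert_inj {v : V} {c : G.Walk v v} (hc : c.support.tail.Nodup)
    {i j : ℕ} (hi1 : 1 ≤ i) (hi : i ≤ c.length) (hj1 : 1 ≤ j) (hj : j ≤ c.length)
    (h : c.getVert i = c.getVert j) : i = j := by
  rw [tail_support_eq_map_range] at hc
  have m1 : i - 1 ∈ List.range c.length := by rw [List.mem_range]; omega
  have m2 : j - 1 ∈ List.range c.length := by rw [List.mem_range]; omega
  have h2 : c.getVert (i - 1 + 1) = c.getVert (j - 1 + 1) := by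
    rw [Nat.sub_add_cancel hi1, Nat.sub_add_cancel hj1]; exact h
  have := List.inj_on_of_nodup_map hc m1 m2 h2
  omega

lemma mem_edges_iff_getVert {u v : V} {p : G.Walk u v} {e : Sym2 V} :
    e ∈ p.edges ↔ ∃ i, i < p.length ∧ s(p.getVert i, p.getVert (i + 1)) = e := by
  induction e with
  | _ a b =>
    rw [← Walk.mem_edges_toSubgraph, Subgraph.mem_edgeSet, Walk.toSubgraph_adj_iff]
    constructor
    · rintro ⟨i, h1, h2⟩; exact ⟨i, h2, h1⟩
    · rintro ⟨i, h1, h2⟩; exact ⟨i, h2, h1⟩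

lemma edge_getVert_mem {u v : V} (p : G.Walk u v) {i : ℕ} (hi : i < p.length) :
    s(p.getVert i, p.getVert (i + 1)) ∈ p.edges :=
  mem_edges_iff_getVert.2 ⟨i, hi, rfl⟩

/-- endpoint of a closed non-nil walk is in the tail of the support -/
lemma end_mem_tail_support {v : V} (c : G.Walk v v) (hc : 0 < c.length) :
    v ∈ c.support.tail := by
  rw [tail_support_eq_map_range]
  refine List.mem_map.2 ⟨c.length - 1, by simp; omega, ?_⟩
  rw [Nat.sub_add_cancel hc, c.getVert_length]

lemma mem_support_rotate_iff {u v x : V} (c : G.Walk v v) (hc : 0 < c.length)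
    (h : u ∈ c.support) : x ∈ (c.rotate u h).support ↔ x ∈ c.support := by
  have h1 : 0 < (c.rotate u h).length := by
    have := (Walk.rotate_edges c u h).perm.length_eq
    rw [Walk.length_edges, Walk.length_edges] at this
    omega
  have e1 : ∀ (w : V) (q : G.Walk w w), 0 < q.length → (x ∈ q.support ↔ x ∈ q.support.tail) := by
    intro w q hq
    rw [Walk.support_eq_cons, List.mem_cons]
    constructor
    · rintro (rfl | h2)
      · exact end_mem_tail_support _ hq
      · exact h2
    · exact fun h2 => Or.inr h2
  rw [e1 _ _ h1, e1 _ _ hc]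
  exact (Walk.support_rotate c u h).perm.mem_iff

lemma mem_edges_rotate_iff {u v : V} (c : G.Walk v v) (h : u ∈ c.support) {e : Sym2 V} :
    e ∈ (c.rotate u h).edges ↔ e ∈ c.edges :=
  (Walk.rotate_edges c u h).perm.mem_iff

lemma length_rotate {u v : V} (c : G.Walk v v) (h : u ∈ c.support) :
    (c.rotate u h).length = c.length := by
  have := (Walk.rotate_edges c u h).perm.length_eq
  rwa [Walk.length_edges, Walk.length_edges] at this

lemma hasChord_rotate_iff {u v : V} {c : G.Walk v v} (hc : 0 < c.length) (h : u ∈ c.support) :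
    HasChord G (c.rotate u h) ↔ HasChord G c := by
  unfold HasChord
  constructor
  · rintro ⟨a, b, ha, hb, hab, he⟩
    exact ⟨a, b, (mem_support_rotate_iff c hc h).1 ha, (mem_support_rotate_iff c hc h).1 hb, hab,
      fun hx => he ((mem_edges_rotate_iff c h).2 hx)⟩
  · rintro ⟨a, b, ha, hb, hab, he⟩
    exact ⟨a, b, (mem_support_rotate_iff c hc h).2 ha, (mem_support_rotate_iff c hc h).2 hb, hab,
      fun hx => he ((mem_edges_rotate_iff c h).1 hx)⟩

end BTAux

set_option linter.unusedSectionVars false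

namespace BTAux2
open SimpleGraph

variable {V : Type} {G H : SimpleGraph V}

/-- The connected component of `a` in `G - S`. -/
def comp (G : SimpleGraph V) (S : Set V) (a : V) : Set V :=
  {v | ∃ p : G.Walk a v, ∀ y ∈ p.support, y ∉ S}

/-- neighborhood of a set -/
def NC (G : SimpleGraph V) (C : Set V) : Set V := {v : V | v ∉ C ∧ ∃ u ∈ C, G.Adj u v}

lemma comp_self {S : Set V} {a : V} (ha : a ∉ S) : a ∈ comp G S a :=
  ⟨Walk.nil, by simpa using ha⟩

lemma not_mem_S_of_mem_comp {S : Set V} {a v : V} (h : v ∈ comp G S a) : v ∉ S := by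
  obtain ⟨p, hp⟩ := h; exact hp v p.end_mem_support

lemma start_not_mem_S_of_mem_comp {S : Set V} {a v : V} (h : v ∈ comp G S a) : a ∉ S := by
  obtain ⟨p, hp⟩ := h; exact hp a p.start_mem_support

lemma comp_symm {S : Set V} {a v : V} (h : v ∈ comp G S a) : a ∈ comp G S v := by
  obtain ⟨p, hp⟩ := h
  exact ⟨p.reverse, fun y hy => hp y (by rwa [Walk.support_reverse, List.mem_reverse] at hy)⟩

lemma comp_trans {S : Set V} {a v w : V} (h : v ∈ comp G S a) (h2 : w ∈ comp G S v) :
    w ∈ comp G S a := by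
  obtain ⟨p, hp⟩ := h; obtain ⟨q, hq⟩ := h2
  refine ⟨p.append q, fun y hy => ?_⟩
  rw [Walk.mem_support_append_iff] at hy
  exact hy.elim (hp y) (hq y)

lemma comp_eq_of_mem {S : Set V} {a v : V} (h : v ∈ comp G S a) : comp G S a = comp G S v := by
  ext z
  exact ⟨fun hz => comp_trans (comp_symm h) hz, fun hz => comp_trans h hz⟩

lemma comp_closure {S : Set V} {a v w : V} (h : v ∈ comp G S a) (hadj : G.Adj v w)
    (hw : w ∉ S) : w ∈ comp G S a := by
  obtain ⟨p, hp⟩ := h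
  refine ⟨p.append (Walk.cons hadj Walk.nil), fun y hy => ?_⟩
  rw [Walk.mem_support_append_iff] at hy
  rcases hy with hy | hy
  · exact hp y hy
  · have : y = v ∨ y = w := by simpa using hy
    rcases this with rfl | rfl
    · exact hp y p.end_mem_support
    · simpa using hw

lemma comp_of_walk_support {S : Set V} {a v : V} (p : G.Walk a v) (hp : ∀ y ∈ p.support, y ∉ S)
    {z : V} (hz : z ∈ p.support) : z ∈ comp G S a := by
  classical
  exact ⟨p.takeUntil z hz, fun y hy => hp y (p.support_takeUntil_subset hz hy)⟩

/-- transfer a walk with support in T to the induced subgraph -/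
lemma reachable_induce_of_walk {T : Set V} {a b : V} (p : G.Walk a b)
    (hp : ∀ x ∈ p.support, x ∈ T) :
    (G.induce T).Reachable ⟨a, hp a p.start_mem_support⟩ ⟨b, hp b p.end_mem_support⟩ := by
  induction p with
  | nil => rfl
  | @cons u w b h q ih =>
    have hw : w ∈ T := hp w (by simp)
    have h1 : (G.induce T).Adj ⟨u, hp u (Walk.start_mem_support _)⟩ ⟨w, hw⟩ := by
      simp only [comap_adj, Function.Embedding.coe_subtype]
      exact h
    exact h1.reachable.trans (ih fun x hx => hp x (by simp [hx]))

lemma exists_walk_of_induce {T : Set V} {x y : ↥T} (q : (G.induce T).Walk x y) :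
    ∃ p : G.Walk x.1 y.1, ∀ z ∈ p.support, z ∈ T := by
  induction q with
  | nil =>
    refine ⟨Walk.nil, fun z hz => ?_⟩
    simp only [Walk.support_nil, List.mem_singleton] at hz
    subst hz; exact Subtype.coe_prop _
  | @cons u w b h q ih =>
    obtain ⟨p, hp⟩ := ih
    have hadj : G.Adj u.1 w.1 := by simpa using h
    refine ⟨Walk.cons hadj p, fun z hz => ?_⟩
    simp only [Walk.support_cons, List.mem_cons] at hz
    rcases hz with rfl | hz
    · exact u.2
    · exact hp z hz

lemma comp_connected {S : Set V} {a : V} (ha : a ∉ S) : (G.induce (comp G S a)).Connected := by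
  rw [connected_iff]
  refine ⟨?_, ⟨⟨a, comp_self ha⟩⟩⟩
  · intro x y
    have hx : (G.induce (comp G S a)).Reachable ⟨a, comp_self ha⟩ x := by
      obtain ⟨p, hp⟩ := x.2
      have := reachable_induce_of_walk (T := comp G S a) p
        (fun z hz => comp_of_walk_support p hp hz)
      exact this
    obtain ⟨p, hp⟩ := y.2
    exact hx.symm.trans (reachable_induce_of_walk (T := comp G S a) p
      (fun z hz => comp_of_walk_support p hp hz))

lemma comp_isConnComp {S : Set V} {a : V} (ha : a ∉ S) :
    IsConnCompAvoiding G S (comp G S a) := by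
  refine ⟨⟨a, comp_self ha⟩, fun v hv => not_mem_S_of_mem_comp hv, comp_connected ha, ?_⟩
  intro u v hu hv hadj
  exact comp_closure hu hadj hv

lemma isConnComp_eq_comp {S C : Set V} {a : V} (hC : IsConnCompAvoiding G S C) (ha : a ∈ C) :
    C = comp G S a := by
  obtain ⟨hne, hsub, hconn, hclos⟩ := hC
  ext z
  constructor
  · intro hz
    obtain ⟨q⟩ := hconn.preconnected ⟨a, ha⟩ ⟨z, hz⟩
    obtain ⟨p, hp⟩ := exists_walk_of_induce q
    exact ⟨p, fun y hy => hsub (hp y hy)⟩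
  · rintro ⟨p, hp⟩
    clear hne hconn
    induction p with
    | nil => exact ha
    | @cons u w b h q ih =>
      have hw : w ∉ S := hp w (by simp)
      have hwC : w ∈ C := hclos u w ha hw h
      exact ih hwC (fun y hy => hp y (by simp [hy]))

/-- a walk from inside C to outside C passes through the neighborhood of C -/
lemma walk_exit {C : Set V} {u v : V} (p : G.Walk u v) : u ∈ C → v ∉ C →
    ∃ x ∈ p.support, x ∈ NC G C := by
  induction p with
  | nil => exact fun hu hv => absurd hu hv
  | @cons a w b h q ih =>
    intro hu hv
    by_cases hw : w ∈ C
    · obtain ⟨x, hx1, hx2⟩ := ih hw hv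
      exact ⟨x, by simp [hx1], hx2⟩
    · exact ⟨w, by simp, hw, a, hu, h⟩

lemma NC_subset_of_closed {S C : Set V} (hC : IsConnCompAvoiding G S C) : NC G C ⊆ S := by
  rintro z ⟨hz1, u, hu, hadj⟩
  by_contra hzS
  exact hz1 (hC.2.2.2 u z hu hzS hadj)

end BTAux2

namespace BTAux3
open SimpleGraph BTAux BTAux2

variable {V : Type} [DecidableEq V] {G H : SimpleGraph V} {S : Set V}

def Ok (G : SimpleGraph V) (S : Set V) (u v : V) : Prop :=
  (u ∈ S ∧ v ∈ S) ∨ v ∈ comp G S u ∨ (u ∈ S ∧ ∃ w ∈ comp G S v, G.Adj u w) ∨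
    (v ∈ S ∧ ∃ w ∈ comp G S u, G.Adj v w)

lemma Ok.symm' {u v : V} : Ok G S u v → Ok G S v u := by
  rintro (⟨h1, h2⟩ | h | ⟨h1, h2⟩ | ⟨h1, h2⟩)
  · exact Or.inl ⟨h2, h1⟩
  · exact Or.inr (Or.inl (comp_symm h))
  · exact Or.inr (Or.inr (Or.inr ⟨h1, h2⟩))
  · exact Or.inr (Or.inr (Or.inl ⟨h1, h2⟩))

def Hstar (G H : SimpleGraph V) (S : Set V) : SimpleGraph V where
  Adj u v := H.Adj u v ∧ Ok G S u v
  symm := ⟨fun u v ⟨h1, h2⟩ => ⟨h1.symm, h2.symm'⟩⟩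
  loopless := ⟨fun u ⟨h1, _⟩ => H.loopless.irrefl u h1⟩

lemma Hstar_le : Hstar G H S ≤ H := by intro u v h; exact h.1

lemma le_Hstar (hGH : G ≤ H) : G ≤ Hstar G H S := by
  intro u v h
  refine ⟨hGH h, ?_⟩
  by_cases hu : u ∈ S <;> by_cases hv : v ∈ S
  · exact Or.inl ⟨hu, hv⟩
  · exact Or.inr (Or.inr (Or.inl ⟨hu, v, comp_self hv, h⟩))
  · exact Or.inr (Or.inr (Or.inr ⟨hv, u, comp_self hu, h.symm⟩))
  · refine Or.inr (Or.inl ⟨Walk.cons h Walk.nil, fun y hy => ?_⟩)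
    have : y = u ∨ y = v := by simpa using hy
    rcases this with rfl | rfl
    exacts [hu, hv]

lemma chordal_Hstar (hch : Chordal H) (hcl : H.IsClique S) : Chordal (Hstar G H S) := by
  intro v0 c hcyc hlen
  by_contra hnoch
  have hle : Hstar G H S ≤ H := Hstar_le
  have hedges : ∀ e ∈ c.edges, e ∈ H.edgeSet := fun e he =>
    edgeSet_mono hle (c.edges_subset_edgeSet he)
  have hcyc' : (c.transfer H hedges).IsCycle := hcyc.transfer _
  have hlen' : 4 ≤ (c.transfer H hedges).length := by
    rwa [Walk.length_transfer]
  obtain ⟨u, w, hu, hw, hadjH, hne⟩ := hch v0 (c.transfer H hedges) hcyc' hlen'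
  rw [Walk.support_transfer] at hu hw
  rw [Walk.edges_transfer] at hne
  suffices hOk : Ok G S u w by exact hnoch ⟨u, w, hu, hw, ⟨hadjH, hOk⟩, hne⟩
  by_cases hallS : ∀ z ∈ c.support, z ∈ S
  · exact Or.inl ⟨hallS u hu, hallS w hw⟩
  push_neg at hallS
  obtain ⟨a0, ha0sup, ha0S⟩ := hallS
  have hpos : 0 < c.length := by omega
  set c₁ := c.rotate a0 ha0sup with hc₁
  have hlen1 : c₁.length = c.length := length_rotate c ha0sup
  have hcyc1 : c₁.IsCycle := hcyc.rotate ha0sup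
  have hnoch1 : ¬ HasChord (Hstar G H S) c₁ := by
    rw [hasChord_rotate_iff hpos]; exact hnoch
  set n := c₁.length with hn
  have hn4 : 4 ≤ n := by omega
  set g := c₁.getVert with hgdef
  have hg0 : g 0 = a0 := c₁.getVert_zero
  have hgn : g n = a0 := c₁.getVert_length
  have hnodup : c₁.support.tail.Nodup := hcyc1.support_nodup
  have inj : ∀ {i j : ℕ}, 1 ≤ i → i ≤ n → 1 ≤ j → j ≤ n → g i = g j → i = j :=
    fun hi1 hi hj1 hj h => cyc_getVert_inj hnodup hi1 hi hj1 hj h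
  have hadj : ∀ i, i < n → (Hstar G H S).Adj (g i) (g (i + 1)) :=
    fun i hi => c₁.adj_getVert_succ hi
  have hsupmem : ∀ i, g i ∈ c₁.support := fun i => getVert_mem_support c₁ i
  have hg0S : ∀ i ≤ n, g i ∈ S → 1 ≤ i ∧ i ≤ n - 1 := by
    intro i hi hgi
    constructor
    · rcases Nat.eq_zero_or_pos i with rfl | h
      · exact absurd (hg0 ▸ hgi) ha0S
      · exact h
    · rcases Nat.lt_or_ge i n with h | h
      · omega
      · have : i = n := le_antisymm hi h
        subst this
        exact absurd (hgn ▸ hgi) ha0S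
  have htool : ∀ p q : V, p ∈ c₁.support → q ∈ c₁.support → (Hstar G H S).Adj p q →
      s(p, q) ∈ c₁.edges := by
    intro p q h1 h2 h3
    by_contra h4
    exact hnoch1 ⟨p, q, h1, h2, h3, h4⟩
  -- two S-vertices on the cycle are consecutive
  have hSsep : ∀ i j, 1 ≤ i → i < j → j ≤ n - 1 → g i ∈ S → g j ∈ S → j = i + 1 := by
    intro i j hi hij hj hgi hgj
    by_contra hne'
    have hgne : g i ≠ g j := fun h => by
      have := inj hi (by omega) (by omega) (by omega) h; omega
    have hstar : (Hstar G H S).Adj (g i) (g j) := ⟨hcl hgi hgj hgne, Or.inl ⟨hgi, hgj⟩⟩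
    have hmem := htool _ _ (hsupmem i) (hsupmem j) hstar
    rw [mem_edges_iff_getVert] at hmem
    obtain ⟨k, hk, hke⟩ := hmem
    rw [Sym2.eq_iff] at hke
    rw [← hgdef] at hke
    have hk1 : 1 ≤ k := by
      rcases Nat.eq_zero_or_pos k with rfl | h
      · rcases hke with ⟨h1, _⟩ | ⟨h1, _⟩
        · rw [hg0] at h1; exact absurd (h1 ▸ hgi) ha0S
        · rw [hg0] at h1; exact absurd (h1 ▸ hgj) ha0S
      · exact h
    rcases hke with ⟨h1, h2⟩ | ⟨h1, h2⟩
    · have e1 := inj hk1 (by omega) hi (by omega) h1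
      have e2 := inj (by omega) (by omega) (by omega) (by omega) h2
      omega
    · have e1 := inj hk1 (by omega) (by omega) (by omega) h1
      have e2 := inj (by omega) (by omega) hi (by omega) h2
      omega
  set CC := comp G S a0 with hCC
  have hstep : ∀ i, i < n → g i ∈ CC → g (i + 1) ∉ S → g (i + 1) ∈ CC := by
    intro i hi hgi hgn1
    obtain ⟨hH, hOk⟩ := hadj i hi
    rcases hOk with ⟨h1, _⟩ | h | ⟨h1, _⟩ | ⟨h1, _⟩
    · exact absurd h1 (not_mem_S_of_mem_comp hgi)
    · exact comp_trans hgi h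
    · exact absurd h1 (not_mem_S_of_mem_comp hgi)
    · exact absurd h1 hgn1
  have hstep' : ∀ i, i < n → g (i + 1) ∈ CC → g i ∉ S → g i ∈ CC := by
    intro i hi hgi1 hgiS
    obtain ⟨hH, hOk⟩ := (hadj i hi).symm
    rcases hOk with ⟨h1, _⟩ | h | ⟨h1, _⟩ | ⟨h1, _⟩
    · exact absurd h1 (not_mem_S_of_mem_comp hgi1)
    · exact comp_trans hgi1 h
    · exact absurd h1 (not_mem_S_of_mem_comp hgi1)
    · exact absurd h1 hgiS
  have hSnbr : ∀ p q : V, (Hstar G H S).Adj p q → p ∈ CC → q ∈ S →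
      ∃ w' ∈ CC, G.Adj q w' := by
    rintro p q ⟨hH, hOk⟩ hp hq
    rcases hOk with ⟨h1, _⟩ | h | ⟨h1, _⟩ | ⟨_, w', hw', hadj'⟩
    · exact absurd h1 (not_mem_S_of_mem_comp hp)
    · exact absurd hq (not_mem_S_of_mem_comp (comp_trans hp h))
    · exact absurd h1 (not_mem_S_of_mem_comp hp)
    · exact ⟨w', comp_trans hp hw', hadj'⟩
  have hFW : ∀ i, i ≤ n → (∀ k, 1 ≤ k → k ≤ i → g k ∉ S) → g i ∈ CC := by
    intro i
    induction i with
    | zero => intro _ _; rw [hg0]; exact comp_self ha0S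
    | succ i ih =>
      intro hi hk
      exact hstep i (by omega) (ih (by omega) (fun k h1 h2 => hk k h1 (by omega)))
        (hk (i + 1) (by omega) le_rfl)
  have hBW : ∀ j, j ≤ n → (∀ k, n - j ≤ k → k ≤ n - 1 → g k ∉ S) → g (n - j) ∈ CC := by
    intro j
    induction j with
    | zero => intro _ _; rw [Nat.sub_zero, hgn]; exact comp_self ha0S
    | succ j ih =>
      intro hj hk
      have h1 : g (n - j) ∈ CC := ih (by omega) (fun k hk1 hk2 => hk k (by omega) hk2)
      have he : n - (j + 1) + 1 = n - j := by omega
      refine hstep' (n - (j + 1)) (by omega) ?_ (hk (n - (j + 1)) le_rfl (by omega))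
      rw [he]; exact h1
  have hmain : ∀ i, i ≤ n → g i ∈ CC ∨ (g i ∈ S ∧ ∃ w' ∈ CC, G.Adj (g i) w') := by
    intro i hi
    by_cases hgiS : g i ∈ S
    · obtain ⟨hi1, hi2⟩ := hg0S i hi hgiS
      by_cases hlow : ∀ k, 1 ≤ k → k < i → g k ∉ S
      · have h1 : g (i - 1) ∈ CC := hFW (i - 1) (by omega) (fun k hk1 hk2 => hlow k hk1 (by omega))
        have hadj1 : (Hstar G H S).Adj (g (i - 1)) (g i) := by
          have := hadj (i - 1) (by omega)
          rwa [Nat.sub_add_cancel hi1] at this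
        exact Or.inr ⟨hgiS, hSnbr _ _ hadj1 h1 hgiS⟩
      · push_neg at hlow
        obtain ⟨k0, hk01, hk0i, hk0S⟩ := hlow
        have h1 : g (i + 1) ∈ CC := by
          have := hBW (n - (i + 1)) (by omega) ?_
          · rwa [Nat.sub_sub_self (by omega : i + 1 ≤ n)] at this
          · intro k hka hkb
            rw [Nat.sub_sub_self (by omega : i + 1 ≤ n)] at hka
            intro hkS
            have := hSsep k0 k hk01 (by omega) hkb hk0S hkS
            omega
        have hadj1 : (Hstar G H S).Adj (g (i + 1)) (g i) := (hadj i (by omega)).symm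
        exact Or.inr ⟨hgiS, hSnbr _ _ hadj1 h1 hgiS⟩
    · by_cases hlow : ∀ k, 1 ≤ k → k ≤ i → g k ∉ S
      · exact Or.inl (hFW i hi hlow)
      · push_neg at hlow
        obtain ⟨k0, hk01, hk0i, hk0S⟩ := hlow
        have hk0lt : k0 < i := by
          rcases Nat.lt_or_ge k0 i with h | h
          · exact h
          · exact absurd ((le_antisymm hk0i h) ▸ hk0S) hgiS
        have hk0n : k0 ≤ n - 1 := (hg0S k0 (by omega) hk0S).2
        have := hBW (n - i) (by omega) ?_
        · rw [Nat.sub_sub_self hi] at this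
          exact Or.inl this
        · intro k hka hkb
          rw [Nat.sub_sub_self hi] at hka
          intro hkS
          have hki : k ≠ i := fun h => hgiS (h ▸ hkS)
          have := hSsep k0 k hk01 (by omega) hkb hk0S hkS
          omega
  have hu1 : u ∈ c₁.support := (mem_support_rotate_iff c hpos ha0sup).2 hu
  have hw1 : w ∈ c₁.support := (mem_support_rotate_iff c hpos ha0sup).2 hw
  obtain ⟨iu, hgu, hiu⟩ := Walk.mem_support_iff_exists_getVert.1 hu1
  obtain ⟨iw, hgw, hiw⟩ := Walk.mem_support_iff_exists_getVert.1 hw1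
  rw [← hgdef] at hgu hgw
  have hmu := hmain iu hiu
  have hmw := hmain iw hiw
  rw [hgu] at hmu
  rw [hgw] at hmw
  rcases hmu with hmu | ⟨hmuS, wu, hwu, hadju⟩ <;>
    rcases hmw with hmw | ⟨hmwS, ww, hww, hadjw⟩
  · exact Or.inr (Or.inl (comp_trans (comp_symm hmu) hmw))
  · exact Or.inr (Or.inr (Or.inr ⟨hmwS, ww, comp_trans (comp_symm hmu) hww, hadjw⟩))
  · exact Or.inr (Or.inr (Or.inl ⟨hmuS, wu, comp_trans (comp_symm hmw) hwu, hadju⟩))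
  · exact Or.inl ⟨hmuS, hmwS⟩

lemma Hstar_eq (hmin : IsMinimalTriangulation G H) (hcl : H.IsClique S) : Hstar G H S = H := by
  have h1 : Hstar G H S ≤ H := Hstar_le
  by_contra hne
  exact hmin.2 _ (le_Hstar hmin.1.1) (lt_of_le_of_ne h1 hne) (chordal_Hstar hmin.1.2 hcl)

lemma fill_to_comp (hmin : IsMinimalTriangulation G H) (hcl : H.IsClique S) {s u : V}
    (hs : s ∈ S) (hu : u ∉ S) (hadj : H.Adj s u) : ∃ w ∈ comp G S u, G.Adj s w := by
  have h1 : (Hstar G H S).Adj s u := by rw [Hstar_eq hmin hcl]; exact hadj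
  rcases h1.2 with ⟨_, h2⟩ | h | ⟨_, h3⟩ | ⟨h1', _⟩
  · exact absurd h2 hu
  · exact absurd hs (start_not_mem_S_of_mem_comp h)
  · exact h3
  · exact absurd h1' hu

lemma fill_same_comp (hmin : IsMinimalTriangulation G H) (hcl : H.IsClique S) {u v : V}
    (hu : u ∉ S) (hv : v ∉ S) (hadj : H.Adj u v) : v ∈ comp G S u := by
  have h1 : (Hstar G H S).Adj u v := by rw [Hstar_eq hmin hcl]; exact hadj
  rcases h1.2 with ⟨h2, _⟩ | h | ⟨h2, _⟩ | ⟨h2, _⟩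
  · exact absurd h2 hu
  · exact h
  · exact absurd h2 hu
  · exact absurd h2 hv

end BTAux3
namespace BTAux4
open SimpleGraph BTAux

variable {V : Type} [DecidableEq V] {H' H : SimpleGraph V}

lemma length_zero_end {a b : V} (p : H'.Walk a b) (h : p.length = 0) : a = b := by
  cases p with
  | nil => rfl
  | cons h q => simp at h

lemma append_tail_nodup {x y : V} {P : H'.Walk x y} {Q : H'.Walk y x}
    (hcyc : (P.append Q).IsCycle) :
    (P.support.tail ++ Q.support.tail).Nodup := by
  have h1 := hcyc.support_nodup
  have h2 : (P.append Q).support = P.support ++ Q.support.tail := Walk.support_append P Q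
  have h3 : P.support = x :: P.support.tail := P.support_eq_cons
  rw [h2, h3, List.cons_append, List.tail_cons] at h1
  exact h1

lemma append_share {x y : V} {P : H'.Walk x y} {Q : H'.Walk y x} (hxyne : x ≠ y)
    (hcyc : (P.append Q).IsCycle) :
    ∀ z, z ∈ P.support → z ∈ Q.support → z = x ∨ z = y := by
  have hnd := append_tail_nodup hcyc
  have hdisj := List.disjoint_of_nodup_append hnd
  intro z hzP hzQ
  by_contra hcon
  push_neg at hcon
  obtain ⟨hzx, hzy⟩ := hcon
  have h1 : z ∈ P.support.tail := by
    rw [P.support_eq_cons, List.mem_cons] at hzP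
    rcases hzP with rfl | h
    · exact absurd rfl hzx
    · exact h
  have h2 : z ∈ Q.support.tail := by
    rw [Q.support_eq_cons, List.mem_cons] at hzQ
    rcases hzQ with rfl | h
    · exact absurd rfl hzy
    · exact h
  exact hdisj h1 h2

lemma arc_length_two (hle : H' ≤ H) (hch : Chordal H) {x y : V} (hxy : H.Adj x y)
    (P : H'.Walk x y) (Q : H'.Walk y x)
    (hcyc : (P.append Q).IsCycle) (hnoch : ¬ HasChord H' (P.append Q))
    (hePQ : s(x, y) ∉ (P.append Q).edges)
    (hrec : ∀ a b : V, H.Adj a b → s(a, b) ≠ s(x, y) → H'.Adj a b) : P.length = 2 := by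
  have hxyne : x ≠ y := hxy.ne
  have hnd := append_tail_nodup hcyc
  rw [List.nodup_append] at hnd
  obtain ⟨hndP, hndQ, hdisj⟩ := hnd
  have hyPt : y ∈ P.support.tail := by
    have := P.end_mem_support
    rw [P.support_eq_cons, List.mem_cons] at this
    rcases this with h | h
    · exact absurd h.symm hxyne
    · exact h
  have hxQt : x ∈ Q.support.tail := by
    have := Q.end_mem_support
    rw [Q.support_eq_cons, List.mem_cons] at this
    rcases this with h | h
    · exact absurd h hxyne
    · exact h
  have hxnotPt : x ∉ P.support.tail := fun h => hdisj x h x hxQt rfl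
  have hPnodup : P.support.Nodup := by
    rw [P.support_eq_cons]
    exact List.nodup_cons.2 ⟨hxnotPt, hndP⟩
  have hPpath : P.IsPath := Walk.IsPath.mk' hPnodup
  have hP1 : 1 ≤ P.length := by
    by_contra h
    exact hxyne (length_zero_end P (by omega))
  have hsxyP : s(x, y) ∉ P.edges := fun h =>
    hePQ (by rw [Walk.edges_append]; exact List.mem_append.2 (Or.inl h))
  have hP2 : P.length ≠ 1 := by
    intro h1
    apply hsxyP
    have := edge_getVert_mem P (i := 0) (by omega)
    rwa [P.getVert_zero, show (0 + 1 : ℕ) = P.length by omega, P.getVert_length] at this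
  by_contra hcon
  have h3 : 3 ≤ P.length := by omega
  have hPe : ∀ e ∈ P.edges, e ∈ H.edgeSet := fun e he =>
    edgeSet_mono hle (P.edges_subset_edgeSet he)
  set P' := P.transfer H hPe with hP'
  set D := P'.append (Walk.cons hxy.symm Walk.nil) with hD
  have hDlen : D.length = P.length + 1 := by
    rw [hD, Walk.length_append, Walk.length_transfer]
    simp
  have hDsup : D.support = P.support ++ [x] := by
    rw [hD, Walk.support_append, Walk.support_transfer]
    simp
  have hDedges : D.edges = P.edges ++ [s(y, x)] := by
    rw [hD, Walk.edges_append, Walk.edges_transfer]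
    simp
  have hDcyc : D.IsCycle := by
    rw [Walk.isCycle_def]
    refine ⟨?_, ?_, ?_⟩
    · rw [Walk.isTrail_def, hDedges]
      rw [List.nodup_append]
      refine ⟨hPpath.isTrail.edges_nodup, List.nodup_singleton _, ?_⟩
      intro e he
      simp only [List.mem_singleton]
      rintro _ rfl rfl
      rw [Sym2.eq_swap] at he
      exact hsxyP he
    · intro h
      have := congrArg Walk.length h
      rw [hDlen] at this
      simp at this
    · obtain ⟨t, ht⟩ : ∃ t, P.support = x :: t := ⟨P.support.tail, P.support_eq_cons⟩
      have h9 : D.support.tail = P.support.tail ++ [x] := by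
        rw [hDsup, ht]; simp
      rw [h9]
      rw [List.nodup_append]
      exact ⟨hndP, List.nodup_singleton _, fun a ha => by
        simp only [List.mem_singleton]
        rintro _ rfl rfl
        exact hxnotPt ha⟩
  obtain ⟨u, w, hu, hw, hadjH, hne2⟩ := hch x D hDcyc (by omega)
  have huP : u ∈ P.support := by
    rw [hDsup, List.mem_append] at hu
    rcases hu with h | h
    · exact h
    · simp at h; subst h; exact P.start_mem_support
  have hwP : w ∈ P.support := by
    rw [hDsup, List.mem_append] at hw
    rcases hw with h | h
    · exact h
    · simp at h; subst h; exact P.start_mem_support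
  have hne3 : s(u, w) ∉ P.edges := fun h =>
    hne2 (by rw [hDedges]; exact List.mem_append.2 (Or.inl h))
  have hne4 : s(u, w) ≠ s(x, y) := by
    intro h
    apply hne2
    rw [hDedges, h, Sym2.eq_swap]
    exact List.mem_append.2 (Or.inr (List.mem_singleton.2 rfl))
  have hadj' : H'.Adj u w := hrec u w hadjH hne4
  have huPQ : u ∈ (P.append Q).support := by
    rw [Walk.mem_support_append_iff]; exact Or.inl huP
  have hwPQ : w ∈ (P.append Q).support := by
    rw [Walk.mem_support_append_iff]; exact Or.inl hwP
  have hmem : s(u, w) ∉ (P.append Q).edges := by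
    rw [Walk.edges_append]
    intro h
    rcases List.mem_append.1 h with h | h
    · exact hne3 h
    · have huQ : u ∈ Q.support := Q.fst_mem_support_of_mem_edges h
      have hwQ : w ∈ Q.support := Q.snd_mem_support_of_mem_edges h
      have h1 := append_share hxyne hcyc u huP huQ
      have h2 := append_share hxyne hcyc w hwP hwQ
      apply hne4
      rcases h1 with rfl | rfl <;> rcases h2 with rfl | rfl
      · exact absurd rfl hadjH.ne
      · rfl
      · exact Sym2.eq_swap
      · exact absurd rfl hadjH.ne
  exact hnoch ⟨u, w, huPQ, hwPQ, hadj', hmem⟩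

lemma four_cycle {G H : SimpleGraph V} (hmin : IsMinimalTriangulation G H) {x y : V}
    (hxy : H.Adj x y) (hnG : ¬ G.Adj x y) :
    ∃ a b : V, H.Adj x a ∧ H.Adj a y ∧ H.Adj x b ∧ H.Adj b y ∧ a ≠ b ∧ ¬ H.Adj a b := by
  set H' := H.deleteEdges {s(x, y)} with hH'
  have hle' : H' ≤ H := H.deleteEdges_le _
  have hrec : ∀ a b : V, H.Adj a b → s(a, b) ≠ s(x, y) → H'.Adj a b := by
    intro a b h hne
    rw [hH', SimpleGraph.deleteEdges_adj]
    exact ⟨h, by simpa using hne⟩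
  have hGH' : G ≤ H' := by
    intro u v h
    apply hrec u v (hmin.1.1 h)
    intro he
    rw [Sym2.eq_iff] at he
    rcases he with ⟨rfl, rfl⟩ | ⟨rfl, rfl⟩
    · exact hnG h
    · exact hnG h.symm
  have hlt : H' < H := by
    refine lt_of_le_of_ne hle' ?_
    intro h
    have : H'.Adj x y := h ▸ hxy
    rw [hH', SimpleGraph.deleteEdges_adj] at this
    simp at this
  have hnotch : ¬ Chordal H' := hmin.2 H' hGH' hlt
  rw [Chordal] at hnotch
  push_neg at hnotch
  obtain ⟨v0, c, hcyc, hlen, hnoch⟩ := hnotch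
  have hedges : ∀ e ∈ c.edges, e ∈ H.edgeSet := fun e he =>
    edgeSet_mono hle' (c.edges_subset_edgeSet he)
  obtain ⟨u, w, hu, hw, hadjH, hne⟩ :=
    hmin.1.2 v0 (c.transfer H hedges) (hcyc.transfer _) (by rwa [Walk.length_transfer])
  rw [Walk.support_transfer] at hu hw
  rw [Walk.edges_transfer] at hne
  have hkey : s(u, w) = s(x, y) := by
    by_contra h
    exact hnoch ⟨u, w, hu, hw, hrec u w hadjH h, hne⟩
  -- x and y are on the cycle, and s(x,y) is not an edge of the cycle
  have hfacts : x ∈ c.support ∧ y ∈ c.support ∧ s(x, y) ∉ c.edges := by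
    rw [Sym2.eq_iff] at hkey
    rcases hkey with ⟨h1, h2⟩ | ⟨h1, h2⟩
    · exact ⟨h1 ▸ hu, h2 ▸ hw, by rw [← h1, ← h2]; exact hne⟩
    · exact ⟨h2 ▸ hw, h1 ▸ hu, by rw [Sym2.eq_swap, ← h1, ← h2]; exact hne⟩
  obtain ⟨hxsup, hysup, hexy⟩ := hfacts
  have hpos : 0 < c.length := by omega
  set c₁ := c.rotate x hxsup with hc₁
  have hcyc1 : c₁.IsCycle := hcyc.rotate hxsup
  have hnoch1 : ¬ HasChord H' c₁ := by rw [hasChord_rotate_iff hpos]; exact hnoch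
  have hy1 : y ∈ c₁.support := (mem_support_rotate_iff c hpos hxsup).2 hysup
  have hexy1 : s(x, y) ∉ c₁.edges := fun h => hexy ((mem_edges_rotate_iff c hxsup).1 h)
  set P := c₁.takeUntil y hy1 with hP
  set Q := c₁.dropUntil y hy1 with hQ
  have hspec : P.append Q = c₁ := c₁.take_spec hy1
  have hcycPQ : (P.append Q).IsCycle := by rw [hspec]; exact hcyc1
  have hnochPQ : ¬ HasChord H' (P.append Q) := by rw [hspec]; exact hnoch1
  have hePQ : s(x, y) ∉ (P.append Q).edges := by rw [hspec]; exact hexy1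
  have hPlen : P.length = 2 :=
    arc_length_two hle' hmin.1.2 hxy P Q hcycPQ hnochPQ hePQ hrec
  have hQP : Q.append P = c₁.rotate y hy1 := rfl
  have hpos1 : 0 < c₁.length := by rw [length_rotate]; omega
  have hcycQP : (Q.append P).IsCycle := by rw [hQP]; exact hcyc1.rotate hy1
  have hnochQP : ¬ HasChord H' (Q.append P) := by
    rw [hQP, hasChord_rotate_iff hpos1]
    exact hnoch1
  have heQP : s(y, x) ∉ (Q.append P).edges := by
    rw [hQP]
    intro h
    rw [Sym2.eq_swap] at h
    exact hexy1 ((mem_edges_rotate_iff c₁ hy1).1 h)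
  have hrec' : ∀ a b : V, H.Adj a b → s(a, b) ≠ s(y, x) → H'.Adj a b := by
    intro a b h hne'
    exact hrec a b h (by rwa [Sym2.eq_swap (a := y)] at hne')
  have hQlen : Q.length = 2 :=
    arc_length_two hle' hmin.1.2 hxy.symm Q P hcycQP hnochQP heQP hrec'
  set a := P.getVert 1 with ha
  set b := Q.getVert 1 with hb
  have hxa : H'.Adj x a := by
    have := P.adj_getVert_succ (i := 0) (by omega)
    rwa [P.getVert_zero] at this
  have hay : H'.Adj a y := by
    have := P.adj_getVert_succ (i := 1) (by omega)
    rwa [show (1 + 1 : ℕ) = P.length by omega, P.getVert_length] at this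
  have hyb : H'.Adj y b := by
    have := Q.adj_getVert_succ (i := 0) (by omega)
    rwa [Q.getVert_zero] at this
  have hbx : H'.Adj b x := by
    have := Q.adj_getVert_succ (i := 1) (by omega)
    rwa [show (1 + 1 : ℕ) = Q.length by omega, Q.getVert_length] at this
  have haP : a ∈ P.support := getVert_mem_support P 1
  have hbQ : b ∈ Q.support := getVert_mem_support Q 1
  have hax : a ≠ x := hxa.ne'
  have hay' : a ≠ y := hay.ne
  have hbx' : b ≠ x := hbx.ne
  have hby : b ≠ y := hyb.ne'
  have haPt : a ∈ P.support.tail := by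
    rw [P.support_eq_cons, List.mem_cons] at haP
    rcases haP with h | h
    · exact absurd h hax
    · exact h
  have hbQt : b ∈ Q.support.tail := by
    rw [Q.support_eq_cons, List.mem_cons] at hbQ
    rcases hbQ with h | h
    · exact absurd h hby
    · exact h
  have hnd := append_tail_nodup hcycPQ
  have hdisj := List.disjoint_of_nodup_append hnd
  have hab : a ≠ b := fun h => hdisj haPt (by rw [h]; exact hbQt)
  refine ⟨a, b, hle' hxa, hle' hay, (hle' hbx).symm, (hle' hyb).symm, hab, ?_⟩
  intro hadjab
  have hne5 : s(a, b) ≠ s(x, y) := by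
    intro he
    rw [Sym2.eq_iff] at he
    rcases he with ⟨h1, _⟩ | ⟨h1, _⟩
    · exact hax h1
    · exact hay' h1
  have hadj'' : H'.Adj a b := hrec a b hadjab hne5
  have haC : a ∈ c₁.support := c₁.support_takeUntil_subset hy1 haP
  have hbC : b ∈ c₁.support := c₁.support_dropUntil_subset hy1 hbQ
  have hmem : s(a, b) ∉ c₁.edges := by
    rw [← hspec, Walk.edges_append]
    intro h
    rcases List.mem_append.1 h with h | h
    · have : b ∈ P.support := P.snd_mem_support_of_mem_edges h
      rcases append_share hxy.ne hcycPQ b this hbQ with h' | h'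
      · exact hbx' h'
      · exact hby h'
    · have : a ∈ Q.support := Q.fst_mem_support_of_mem_edges h
      rcases append_share hxy.ne hcycPQ a haP this with h' | h'
      · exact hax h'
      · exact hay' h'
  exact hnoch1 ⟨a, b, haC, hbC, hadj'', hmem⟩

end BTAux4
namespace BTAux5
open SimpleGraph BTAux BTAux4

variable {V : Type} [DecidableEq V] {H : SimpleGraph V}

lemma take_add_drop {a b z : V} (p : H.Walk a b) (hz : z ∈ p.support) :
    (p.takeUntil z hz).length + (p.dropUntil z hz).length = p.length := by
  have := congrArg Walk.length (p.take_spec hz)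
  rwa [Walk.length_append] at this

lemma dropUntil_start {a b : V} (p : H.Walk a b) (h : a ∈ p.support) :
    p.dropUntil a h = p := by
  cases p with
  | nil => rfl
  | cons r q => simp [Walk.dropUntil]

lemma dropUntil_cons_ne {a v b z : V} (r : H.Adj a v) (q : H.Walk v b)
    (h : z ∈ (Walk.cons r q).support) (hne : a ≠ z) (hq : z ∈ q.support) :
    (Walk.cons r q).dropUntil z h = q.dropUntil z hq := by
  simp [Walk.dropUntil, hne]

lemma mem_of_mem_cons_support_ne {a v b z : V} {r : H.Adj a v} {q : H.Walk v b}
    (h : z ∈ (Walk.cons r q).support) (hne : a ≠ z) : z ∈ q.support := by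
  rw [Walk.support_cons, List.mem_cons] at h
  rcases h with h | h
  · exact absurd h.symm hne
  · exact h

lemma dropUntil_append_right {a b c y : V} (A : H.Walk a b) (B : H.Walk b c)
    (hyB : y ∈ B.support) (hyA : y ∉ A.support) (h : y ∈ (A.append B).support) :
    (A.append B).dropUntil y h = B.dropUntil y hyB := by
  induction A with
  | nil => rfl
  | @cons u v w r A' ih =>
    have hne : u ≠ y := fun he => hyA (he ▸ Walk.start_mem_support _)
    have h2 : y ∈ (A'.append B).support := by
      exact mem_of_mem_cons_support_ne (r := r) (q := A'.append B) h hne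
    have hyA' : y ∉ A'.support := fun hh => hyA (by rw [Walk.support_cons]; exact List.mem_cons_of_mem _ hh)
    have e1 : ((Walk.cons r A').append B).dropUntil y h
        = (Walk.cons r (A'.append B)).dropUntil y h := rfl
    rw [e1, dropUntil_cons_ne r (A'.append B) h hne h2]
    exact ih B hyB hyA' h2

lemma length_dropUntil_congr {a b y : V} {p q : H.Walk a b} (hpq : p = q)
    (h : y ∈ p.support) (h' : y ∈ q.support) :
    (p.dropUntil y h).length = (q.dropUntil y h').length := by
  subst hpq; rfl

/-- splitting a path at z: shared vertices of take and drop parts equal z -/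
lemma path_split_share {a b z : V} {p : H.Walk a b} (hp : p.IsPath) (hz : z ∈ p.support) :
    ∀ y, y ∈ (p.takeUntil z hz).support → y ∈ (p.dropUntil z hz).support → y = z := by
  intro y hyT hyD
  have hsup : p.support = (p.takeUntil z hz).support ++ (p.dropUntil z hz).support.tail := by
    conv_lhs => rw [← p.take_spec hz]
    exact Walk.support_append _ _
  have hnd : p.support.Nodup := hp.support_nodup
  rw [hsup, List.nodup_append] at hnd
  by_contra hne
  have : y ∈ (p.dropUntil z hz).support.tail := by
    rw [(p.dropUntil z hz).support_eq_cons, List.mem_cons] at hyD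
    rcases hyD with h | h
    · exact absurd h hne
    · exact h
  exact hnd.2.2 y hyT y this rfl

lemma length_dropUntil_lt {a b z y : V} {p : H.Walk a b} (hp : p.IsPath) (hz : z ∈ p.support)
    (hy : y ∈ (p.dropUntil z hz).support) (hyz : y ≠ z) (hy' : y ∈ p.support) :
    (p.dropUntil y hy').length < (p.dropUntil z hz).length := by
  have hyA : y ∉ (p.takeUntil z hz).support := fun h =>
    hyz (path_split_share hp hz y h hy)
  have hyab : y ∈ ((p.takeUntil z hz).append (p.dropUntil z hz)).support := by
    rw [p.take_spec hz]; exact hy'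
  have h1 : (p.dropUntil y hy').length =
      (((p.takeUntil z hz).append (p.dropUntil z hz)).dropUntil y hyab).length :=
    length_dropUntil_congr (p.take_spec hz).symm hy' hyab
  rw [h1, dropUntil_append_right _ _ hy hyA hyab]
  have h2 := take_add_drop (p.dropUntil z hz) hy
  have h3 : 1 ≤ ((p.dropUntil z hz).takeUntil y hy).length := by
    by_contra h
    exact hyz (length_zero_end ((p.dropUntil z hz).takeUntil y hy) (by omega)).symm
  omega

/-- shortcut: an H-adjacent non-edge pair on a walk yields a strictly shorter walk -/
lemma shortcut {c' t u w : V} (p : H.Walk c' t) (hu : u ∈ p.support)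
    (hw : w ∈ (p.dropUntil u hu).support) (hne : u ≠ w) (hadj : H.Adj u w)
    (hnedge : s(u, w) ∉ p.edges) :
    ∃ q : H.Walk c' t, q.length < p.length ∧ ∀ z ∈ q.support, z ∈ p.support := by
  set A := p.takeUntil u hu with hA
  set B := p.dropUntil u hu with hB
  refine ⟨A.append (Walk.cons hadj (B.dropUntil w hw)), ?_, ?_⟩
  · rw [Walk.length_append, Walk.length_cons]
    have h1 : A.length + B.length = p.length := take_add_drop p hu
    have h2 : (B.takeUntil w hw).length + (B.dropUntil w hw).length = B.length :=
      take_add_drop B hw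
    have h3 : 1 ≤ (B.takeUntil w hw).length := by
      by_contra h
      exact hne (length_zero_end (B.takeUntil w hw) (by omega))
    have h4 : (B.takeUntil w hw).length ≠ 1 := by
      intro h
      apply hnedge
      have h5 := edge_getVert_mem (B.takeUntil w hw) (i := 0) (by omega)
      rw [Walk.getVert_zero, show (0 + 1 : ℕ) = (B.takeUntil w hw).length from h.symm,
        Walk.getVert_length] at h5
      have h6 := Walk.edges_takeUntil_subset B hw h5
      have h7 := Walk.edges_dropUntil_subset p hu h6
      exact h7
    omega
  · intro z hz
    rw [Walk.mem_support_append_iff] at hz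
    rcases hz with hz | hz
    · exact p.support_takeUntil_subset hu hz
    · rw [Walk.support_cons, List.mem_cons] at hz
      rcases hz with rfl | hz
      · exact hu
      · exact p.support_dropUntil_subset hu (B.support_dropUntil_subset hw hz)

lemma dropUntil_nil {a : V} (h : a ∈ (Walk.nil : H.Walk a a).support) :
    (Walk.nil : H.Walk a a).dropUntil a h = Walk.nil := rfl

lemma dropUntil_append_left {a b c w : V} (A : H.Walk a b) (B : H.Walk b c)
    (hwA : w ∈ A.support) (h : w ∈ (A.append B).support) :
    (A.append B).dropUntil w h = (A.dropUntil w hwA).append B := by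
  induction A with
  | nil =>
    rw [Walk.mem_support_nil_iff] at hwA
    subst hwA
    have h0 : (Walk.nil : H.Walk w w).dropUntil w (by simp) = Walk.nil := rfl
    have hB : w ∈ B.support := Walk.start_mem_support _
    have h1 : (Walk.nil.append B : H.Walk w c).dropUntil w h = B.dropUntil w hB := rfl
    rw [h1, dropUntil_start]
    exact (Walk.nil_append B).symm ▸ rfl
  | @cons u v w' r A' ih =>
    by_cases hne : u = w
    · subst hne
      have h1 : (Walk.cons r A').dropUntil u hwA = Walk.cons r A' := dropUntil_start _ _
      rw [h1]
      exact dropUntil_start _ _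
    · have hwA' : w ∈ A'.support := mem_of_mem_cons_support_ne hwA hne
      have h2 : w ∈ (A'.append B).support :=
        mem_of_mem_cons_support_ne (r := r) (q := A'.append B) h hne
      have e1 : ((Walk.cons r A').append B).dropUntil w h
          = (Walk.cons r (A'.append B)).dropUntil w h := rfl
      rw [e1, dropUntil_cons_ne r (A'.append B) h hne h2]
      rw [dropUntil_cons_ne r A' hwA hne hwA']
      exact ih B hwA' h2

lemma mem_dropUntil_congr {a b y x : V} {p q : H.Walk a b} (hpq : p = q)
    (h : y ∈ p.support) (h' : y ∈ q.support) :
    x ∈ (p.dropUntil y h).support ↔ x ∈ (q.dropUntil y h').support := by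
  subst hpq; rfl

lemma mem_drop_or_drop {c' t u w : V} (p : H.Walk c' t)
    (hu : u ∈ p.support) (hw : w ∈ p.support) :
    w ∈ (p.dropUntil u hu).support ∨ u ∈ (p.dropUntil w hw).support := by
  by_cases h : w ∈ (p.dropUntil u hu).support
  · exact Or.inl h
  · right
    have hwA : w ∈ (p.takeUntil u hu).support := by
      have : w ∈ ((p.takeUntil u hu).append (p.dropUntil u hu)).support := by
        rw [p.take_spec hu]; exact hw
      rw [Walk.mem_support_append_iff] at this
      rcases this with h2 | h2
      · exact h2
      · exact absurd h2 h
    have hwab : w ∈ ((p.takeUntil u hu).append (p.dropUntil u hu)).support := by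
      rw [p.take_spec hu]; exact hw
    rw [mem_dropUntil_congr (p.take_spec hu).symm hw hwab]
    rw [dropUntil_append_left _ _ hwA hwab]
    rw [Walk.mem_support_append_iff]
    exact Or.inr (Walk.start_mem_support _)

end BTAux5
namespace BTAux6
open SimpleGraph BTAux BTAux2 BTAux4 BTAux5

variable {V : Type} [DecidableEq V] {H : SimpleGraph V}

lemma clique_connected_nbr (hch : Chordal H) {C : Set V} (hCconn : (H.induce C).Connected)
    (hCne : C.Nonempty) :
    ∀ (K : Set V), K.Finite → (∀ k ∈ K, k ∉ C) → H.IsClique K →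
      (∀ k ∈ K, ∃ c ∈ C, H.Adj k c) → ∃ c ∈ C, ∀ k ∈ K, H.Adj c k := by
  intro K hKfin
  refine Set.Finite.induction_on (motive := fun K _ => (∀ k ∈ K, k ∉ C) → H.IsClique K →
      (∀ k ∈ K, ∃ c ∈ C, H.Adj k c) → ∃ c ∈ C, ∀ k ∈ K, H.Adj c k) K hKfin ?_ ?_
  · exact fun _ _ _ => ⟨hCne.some, hCne.some_mem, fun k hk => absurd hk (Set.notMem_empty k)⟩
  · intro k K' hkK' hK'fin ih hdisj hclique hN
    obtain ⟨c', hc'C, hc'adj⟩ := ih (fun x hx => hdisj x (Set.mem_insert_of_mem _ hx))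
      (hclique.subset (Set.subset_insert _ _)) (fun x hx => hN x (Set.mem_insert_of_mem _ hx))
    by_cases hck : H.Adj c' k
    · refine ⟨c', hc'C, fun x hx => ?_⟩
      rcases Set.mem_insert_iff.1 hx with rfl | hx
      · exact hck
      · exact hc'adj x hx
    classical
    have hkC : k ∉ C := hdisj k (Set.mem_insert _ _)
    obtain ⟨c0, hc0C, hc0adj⟩ := hN k (Set.mem_insert _ _)
    have hex : ∃ n, ∃ t, ∃ _ : t ∈ C, H.Adj k t ∧
        ∃ q : H.Walk c' t, (∀ z ∈ q.support, z ∈ C) ∧ q.length = n := by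
      obtain ⟨q0⟩ := hCconn.preconnected ⟨c', hc'C⟩ ⟨c0, hc0C⟩
      obtain ⟨p0, hp0⟩ := exists_walk_of_induce q0
      exact ⟨p0.length, c0, hc0C, hc0adj, p0, hp0, rfl⟩
    obtain ⟨t, htC, hkt, q1, hq1sup, hq1len⟩ := Nat.find_spec hex
    set p := q1.bypass with hpdef
    have hppath : p.IsPath := Walk.bypass_isPath q1
    have hpsup : ∀ z ∈ p.support, z ∈ C := fun z hz => hq1sup z (q1.support_bypass_subset hz)
    have hplen : p.length = Nat.find hex := by
      have h1 : p.length ≤ Nat.find hex := hq1len ▸ Walk.length_bypass_le q1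
      have h2 : Nat.find hex ≤ p.length := Nat.find_min' hex ⟨t, htC, hkt, p, hpsup, rfl⟩
      omega
    have hone : ∀ y ∈ p.support, y ≠ t → ¬ H.Adj k y := by
      intro y hy hyt hadj
      have h2 := take_add_drop p hy
      have h3 : 1 ≤ (p.dropUntil y hy).length := by
        by_contra h
        exact hyt (length_zero_end (p.dropUntil y hy) (by omega))
      exact Nat.find_min hex (show (p.takeUntil y hy).length < Nat.find hex by omega)
        ⟨y, hpsup y hy, hadj, p.takeUntil y hy,
          fun z hz => hpsup z (p.support_takeUntil_subset hy hz), rfl⟩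
    have hind : ∀ u w, u ∈ p.support → w ∈ p.support → H.Adj u w → s(u, w) ∈ p.edges := by
      intro u w hu hw hadj
      by_contra hnedge
      have key : ∀ (u' w' : V) (hu' : u' ∈ p.support), w' ∈ (p.dropUntil u' hu').support →
          u' ≠ w' → H.Adj u' w' → s(u', w') ∉ p.edges → False := by
        intro u' w' hu' hw' hne' hadj' hnedge'
        obtain ⟨q, hqlen, hqsup⟩ := shortcut p hu' hw' hne' hadj' hnedge'
        exact Nat.find_min hex (show q.length < Nat.find hex by omega)
          ⟨t, htC, hkt, q, fun z hz => hpsup z (hqsup z hz), rfl⟩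
      rcases mem_drop_or_drop p hu hw with h | h
      · exact key u w hu h hadj.ne hadj hnedge
      · exact key w u hw h hadj.ne' hadj.symm (fun hh => hnedge (by rwa [Sym2.eq_swap] at hh))
    refine ⟨t, htC, fun x hx => ?_⟩
    rcases Set.mem_insert_iff.1 hx with rfl | hxK
    · exact hkt.symm
    by_contra hcon
    have hxC : x ∉ C := hdisj x (Set.mem_insert_of_mem _ hxK)
    have hc'x : H.Adj c' x := hc'adj x hxK
    have hex2 : ∃ m, ∃ z, ∃ hz : z ∈ p.support, H.Adj z x ∧ (p.dropUntil z hz).length = m :=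
      ⟨(p.dropUntil c' p.start_mem_support).length, c', p.start_mem_support, hc'x, rfl⟩
    obtain ⟨z, hzp, hzx, hzlen⟩ := Nat.find_spec hex2
    set r := p.dropUntil z hzp with hrdef
    have hrpath : r.IsPath := hppath.dropUntil hzp
    have hrsup : ∀ y ∈ r.support, y ∈ p.support := fun y hy => p.support_dropUntil_subset hzp hy
    have hlast : ∀ y ∈ r.support, y ≠ z → ¬ H.Adj y x := by
      intro y hy hyz hadj
      have h1 : (p.dropUntil y (hrsup y hy)).length < r.length :=
        length_dropUntil_lt hppath hzp hy hyz (hrsup y hy)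
      exact Nat.find_min hex2
        (show (p.dropUntil y (hrsup y hy)).length < Nat.find hex2 by omega)
        ⟨y, hrsup y hy, hadj, rfl⟩
    have hzt : z ≠ t := fun h => hcon (h ▸ hzx)
    have hr1 : 1 ≤ r.length := by
      by_contra h
      exact hzt (length_zero_end r (by omega))
    have hkx : H.Adj k x := hclique (Set.mem_insert _ _) (Set.mem_insert_of_mem _ hxK)
      (fun h => hkK' (h ▸ hxK))
    set D := r.append (Walk.cons hkt.symm (Walk.cons hkx (Walk.cons hzx.symm Walk.nil)))
      with hDdef
    have hDsup : D.support = r.support ++ [k, x, z] := by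
      rw [hDdef, Walk.support_append]; simp
    have hDedges : D.edges = r.edges ++ [s(t, k), s(k, x), s(x, z)] := by
      rw [hDdef, Walk.edges_append]; simp
    have hDlen : D.length = r.length + 3 := by
      rw [hDdef, Walk.length_append]; simp
    have hrC : ∀ y ∈ r.support, y ∈ C := fun y hy => hpsup y (hrsup y hy)
    have hkr : k ∉ r.support := fun h => hkC (hrC k h)
    have hxr : x ∉ r.support := fun h => hxC (hrC x h)
    have hzr : z ∉ r.support.tail := by
      have h5 := hrpath.support_nodup
      rw [r.support_eq_cons] at h5
      exact (List.nodup_cons.1 h5).1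
    have hkz : k ≠ z := fun h => hkC (h ▸ hrC z r.start_mem_support)
    have hxz : x ≠ z := hzx.ne'
    have hkx' : k ≠ x := hkx.ne
    have ht_x : t ≠ x := fun h => hxC (h ▸ htC)
    have ht_k : t ≠ k := fun h => hkC (h ▸ htC)
    have hDcyc : D.IsCycle := by
      rw [Walk.isCycle_def]
      refine ⟨?_, ?_, ?_⟩
      · rw [Walk.isTrail_def, hDedges, List.nodup_append]
        refine ⟨hrpath.isTrail.edges_nodup, ?_, ?_⟩
        · have h1 : s(t, k) ≠ s(k, x) := by
            intro h; rw [Sym2.eq_iff] at h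
            rcases h with ⟨e1, e2⟩ | ⟨e1, e2⟩
            · exact ht_k e1
            · exact ht_x e1
          have h2 : s(t, k) ≠ s(x, z) := by
            intro h; rw [Sym2.eq_iff] at h
            rcases h with ⟨e1, e2⟩ | ⟨e1, e2⟩
            · exact ht_x e1
            · exact hkx' e2
          have h3 : s(k, x) ≠ s(x, z) := by
            intro h; rw [Sym2.eq_iff] at h
            rcases h with ⟨e1, e2⟩ | ⟨e1, e2⟩
            · exact hkx' e1
            · exact hkz e1
          simp [List.nodup_cons, h1, h2, h3]
        · intro e he _ hmem heq; subst heq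
          simp only [List.mem_cons, List.not_mem_nil, or_false] at hmem
          rcases hmem with rfl | rfl | rfl
          · exact hkr (r.snd_mem_support_of_mem_edges he)
          · exact hkr (r.fst_mem_support_of_mem_edges he)
          · exact hxr (r.fst_mem_support_of_mem_edges he)
      · intro h
        have := congrArg Walk.length h
        rw [hDlen] at this
        simp at this
      · obtain ⟨tl, htl⟩ : ∃ tl, r.support = z :: tl := ⟨_, r.support_eq_cons⟩
        have h9 : D.support.tail = r.support.tail ++ [k, x, z] := by
          rw [hDsup, htl]; simp
        rw [h9, List.nodup_append]
        refine ⟨?_, ?_, ?_⟩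
        · have h5 := hrpath.support_nodup
          rw [r.support_eq_cons] at h5
          exact (List.nodup_cons.1 h5).2
        · simp [hkx', hkz, hxz]
        · intro y hy _ hmem heq; subst heq
          have hyr : y ∈ r.support := by
            rw [r.support_eq_cons]; exact List.mem_cons_of_mem _ hy
          simp only [List.mem_cons, List.not_mem_nil, or_false] at hmem
          rcases hmem with rfl | rfl | rfl
          · exact hkr hyr
          · exact hxr hyr
          · exact hzr hy
    obtain ⟨α, β, hα, hβ, hadjαβ, hneαβ⟩ := hch z D hDcyc (by omega)
    have hsplit : ∀ γ, γ ∈ D.support → γ ∈ r.support ∨ γ = k ∨ γ = x := by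
      intro γ hγ
      rw [hDsup, List.mem_append] at hγ
      rcases hγ with h | h
      · exact Or.inl h
      · simp only [List.mem_cons, List.mem_singleton, List.not_mem_nil, or_false] at h
        rcases h with rfl | rfl | rfl
        · exact Or.inr (Or.inl rfl)
        · exact Or.inr (Or.inr rfl)
        · exact Or.inl r.start_mem_support
    have hrind : ∀ γ δ, γ ∈ r.support → δ ∈ r.support → H.Adj γ δ → s(γ, δ) ∈ r.edges := by
      intro γ δ hγ hδ hadj'
      have h1 := hind γ δ (hrsup γ hγ) (hrsup δ hδ) hadj'
      have h2 : p.edges = (p.takeUntil z hzp).edges ++ r.edges := by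
        conv_lhs => rw [← p.take_spec hzp]
        exact Walk.edges_append _ _
      rw [h2, List.mem_append] at h1
      rcases h1 with h1 | h1
      · exfalso
        have hγA : γ ∈ (p.takeUntil z hzp).support := Walk.fst_mem_support_of_mem_edges _ h1
        have hδA : δ ∈ (p.takeUntil z hzp).support := Walk.snd_mem_support_of_mem_edges _ h1
        have e1 := path_split_share hppath hzp γ hγA hγ
        have e2 := path_split_share hppath hzp δ hδA hδ
        exact hadj'.ne (e1.trans e2.symm)
      · exact h1
    have hmaint : ∀ γ, γ ∈ r.support → H.Adj γ k → γ = t := by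
      intro γ hγ hadj'
      by_contra h
      exact hone γ (hrsup γ hγ) h hadj'.symm
    have hmainz : ∀ γ, γ ∈ r.support → H.Adj γ x → γ = z := by
      intro γ hγ hadj'
      by_contra h
      exact hlast γ hγ h hadj'
    have hDe : ∀ e : Sym2 V, e = s(t, k) ∨ e = s(k, x) ∨ e = s(x, z) → e ∈ D.edges := by
      intro e he
      rw [hDedges, List.mem_append]
      right
      rcases he with rfl | rfl | rfl <;> simp
    apply hneαβ
    rcases hsplit α hα with hαr | rfl | rfl <;> rcases hsplit β hβ with hβr | rfl | rfl
    · rw [hDedges, List.mem_append]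
      exact Or.inl (hrind α β hαr hβr hadjαβ)
    · have e := hmaint α hαr hadjαβ
      subst e
      exact hDe _ (Or.inl rfl)
    · have e := hmainz α hαr hadjαβ
      subst e
      exact hDe _ (Or.inr (Or.inr (by rw [Sym2.eq_swap])))
    · have e := hmaint β hβr hadjαβ.symm
      subst e
      exact hDe _ (Or.inl (by rw [Sym2.eq_swap]))
    · exact absurd rfl hadjαβ.ne
    · exact hDe _ (Or.inr (Or.inl rfl))
    · have e := hmainz β hβr hadjαβ.symm
      subst e
      exact hDe _ (Or.inr (Or.inr rfl))
    · exact hDe _ (Or.inr (Or.inl (by rw [Sym2.eq_swap])))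
    · exact absurd rfl hadjαβ.ne

end BTAux6
namespace BTMain
open SimpleGraph BTAux BTAux2 BTAux3 BTAux4 BTAux5 BTAux6

variable {V : Type} [DecidableEq V] [Finite V] {G : SimpleGraph V}

lemma no_full_component {Ω : Set V} (hΩ : IsPotentialMaximalClique G Ω)
    {C : Set V} (hC : IsConnCompAvoiding G Ω C) : ¬ Ω ⊆ NC G C := by
  intro hsub
  obtain ⟨H, hmin, hmax⟩ := hΩ
  have hGH : G ≤ H := hmin.1.1
  have hHconn : (H.induce C).Connected := hC.2.2.1.mono (fun a b hab => hGH hab)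
  obtain ⟨c, hcC, hcall⟩ := clique_connected_nbr hmin.1.2 hHconn hC.1 Ω (Set.toFinite Ω)
    (fun k hk hkC => (hC.2.1 hkC) hk) hmax.1
    (fun k hk => by
      obtain ⟨hk1, w, hwC, hadj⟩ := hsub hk
      exact ⟨w, hwC, (hGH hadj).symm⟩)
  have hclique' : H.IsClique (insert c Ω) :=
    hmax.1.insert (fun b hb _ => hcall b hb)
  have heq : insert c Ω = Ω := hmax.2 (insert c Ω) hclique' (Set.subset_insert c Ω)
  have : c ∈ Ω := heq ▸ Set.mem_insert c Ω
  exact (hC.2.1 hcC) this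

lemma pmc_completion {Ω : Set V} (hΩ : IsPotentialMaximalClique G Ω)
    {x y : V} (hx : x ∈ Ω) (hy : y ∈ Ω) (hne : x ≠ y) (hnadj : ¬ G.Adj x y) :
    ∃ C : Set V, IsConnCompAvoiding G Ω C ∧ x ∈ NC G C ∧ y ∈ NC G C := by
  obtain ⟨H, hmin, hmax⟩ := hΩ
  have hH : H.Adj x y := hmax.1 hx hy hne
  obtain ⟨a, b, hxa, hay, hxb, hby, hab, hnab⟩ := four_cycle hmin hH hnadj
  have key : ∀ a', a' ∉ Ω → H.Adj x a' → H.Adj a' y →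
      ∃ C, IsConnCompAvoiding G Ω C ∧ x ∈ NC G C ∧ y ∈ NC G C := by
    intro a' ha' h1 h2
    obtain ⟨w1, hw1, hadj1⟩ := fill_to_comp hmin hmax.1 hx ha' h1
    obtain ⟨w2, hw2, hadj2⟩ := fill_to_comp hmin hmax.1 hy ha' h2.symm
    refine ⟨comp G Ω a', comp_isConnComp ha',
      ⟨fun hxc => (not_mem_S_of_mem_comp hxc) hx, w1, hw1, hadj1.symm⟩,
      ⟨fun hyc => (not_mem_S_of_mem_comp hyc) hy, w2, hw2, hadj2.symm⟩⟩
  by_cases haΩ : a ∈ Ω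
  · have hbΩ : b ∉ Ω := fun hbΩ' => hnab (hmax.1 haΩ hbΩ' hab)
    exact key b hbΩ hxb hby
  · exact key a haΩ hxa hay

lemma sep_symm {u v : V} {S : Set V} (h : IsSeparator G u v S) : IsSeparator G v u S := by
  refine ⟨h.2.1, h.1, fun p => ?_⟩
  obtain ⟨x, hx, hxS⟩ := h.2.2 p.reverse
  exact ⟨x, by rwa [Walk.support_reverse, List.mem_reverse] at hx, hxS⟩

lemma NC_comp_subset {S : Set V} {u : V} : NC G (comp G S u) ⊆ S := by
  rintro z ⟨hz1, w, hw, hadj⟩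
  by_contra hzS
  exact hz1 (comp_closure hw hadj hzS)

lemma full_of_minimal {u v : V} {S : Set V} (hsep : IsSeparator G u v S)
    (hmin : ∀ S' : Set V, S' ⊂ S → ¬ IsSeparator G u v S') :
    ∀ s ∈ S, s ∈ NC G (comp G S u) := by
  classical
  intro s hs
  by_contra hcon
  apply hmin (S \ {s}) (Set.sdiff_singleton_ssubset.2 hs)
  refine ⟨fun h => hsep.1 h.1, fun h => hsep.2.1 h.1, ?_⟩
  intro p
  by_contra hno
  push_neg at hno
  obtain ⟨x, hxsup, hxS⟩ := hsep.2.2 p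
  have hxs : x = s := by
    by_contra h
    exact hno x hxsup ⟨hxS, h⟩
  set q := p.takeUntil x hxsup with hq
  have hqS : ∀ y ∈ q.support, y ∈ S → y = x := by
    intro y hy hyS
    have hy' : y ∈ p.support := p.support_takeUntil_subset hxsup hy
    by_contra hne
    exact hno y hy' ⟨hyS, fun he => hne (he.trans hxs.symm)⟩
  have hcount : q.support.count x = 1 := p.count_support_takeUntil_eq_one hxsup
  have hqlen : 1 ≤ q.length := by
    by_contra h
    have : u = x := length_zero_end q (by omega)
    exact hsep.1 (this ▸ hxS)
  have hnotnil : ¬ q.reverse.Nil := by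
    rw [Walk.nil_iff_length_eq, Walk.length_reverse]
    omega
  obtain ⟨a', hadj', r, hr⟩ := Walk.not_nil_iff.1 hnotnil
  have hxnr : x ∉ r.support := by
    have h1 : q.reverse.support = x :: r.support := by rw [hr, Walk.support_cons]
    have h2 : q.reverse.support.count x = q.support.count x := by
      rw [Walk.support_reverse, List.count_reverse]
    rw [h1, List.count_cons_self, hcount] at h2
    exact List.count_eq_zero.1 (by omega)
  have hrq : ∀ z ∈ r.support, z ∈ q.support := by
    intro z hz
    have : z ∈ q.reverse.support := by
      rw [hr, Walk.support_cons]; exact List.mem_cons_of_mem _ hz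
    rwa [Walk.support_reverse, List.mem_reverse] at this
  have hrS : ∀ z ∈ r.reverse.support, z ∉ S := by
    intro z hz hzS
    rw [Walk.support_reverse, List.mem_reverse] at hz
    have := hqS z (hrq z hz) hzS
    exact hxnr (this ▸ hz)
  have ha'comp : a' ∈ comp G S u := ⟨r.reverse, hrS⟩
  apply hcon
  refine ⟨fun hsc => (not_mem_S_of_mem_comp hsc) hs, a', ha'comp, ?_⟩
  have : G.Adj x a' := hadj'
  rw [hxs] at this
  exact this.symm

lemma fwd_half {Ω S : Set V} (hS : S ⊆ Ω)
    {u v : V} (hsep : IsSeparator G u v S)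
    (hminS : ∀ S' : Set V, S' ⊂ S → ¬ IsSeparator G u v S')
    (hdisj : comp G S u ∩ Ω = ∅) :
    ∃ C, IsConnCompAvoiding G Ω C ∧ S = NC G C := by
  have huS : u ∉ S := hsep.1
  refine ⟨comp G S u, ⟨⟨u, comp_self huS⟩, ?_, comp_connected huS, ?_⟩, ?_⟩
  · intro z hz hzΩ
    exact Set.eq_empty_iff_forall_notMem.1 hdisj z ⟨hz, hzΩ⟩
  · intro a b ha hb hadj
    exact comp_closure ha hadj (fun hbS => hb (hS hbS))
  · exact Set.Subset.antisymm (fun s hs => full_of_minimal hsep hminS s hs) NC_comp_subset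

end BTMain

namespace BTMain2
open SimpleGraph BTAux BTAux2 BTAux3 BTAux4 BTAux5 BTAux6 BTMain

theorem main_aux {V : Type} [Fintype V] (G : SimpleGraph V) (Ω : Set V)
    (hΩ : IsPotentialMaximalClique G Ω) (S : Set V) (hS : S ⊆ Ω) :
    IsMinimalSeparator G S ↔
      ∃ C : Set V, IsConnCompAvoiding G Ω C ∧
        S = {v : V | v ∉ C ∧ ∃ u ∈ C, G.Adj u v} := by
  classical
  constructor
  · rintro ⟨u, v, hne, hnadj, hsep, hminS⟩
    have hdisj2 : comp G S u ∩ comp G S v = ∅ := by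
      rw [Set.eq_empty_iff_forall_notMem]
      rintro z ⟨hzu, hzv⟩
      have hvc : v ∈ comp G S u := comp_trans hzu (comp_symm hzv)
      obtain ⟨p, hp⟩ := hvc
      obtain ⟨w, hw, hwS⟩ := hsep.2.2 p
      exact hp w hw hwS
    have hkey : comp G S u ∩ Ω = ∅ ∨ comp G S v ∩ Ω = ∅ := by
      by_contra hcc
      push_neg at hcc
      obtain ⟨h1, h2⟩ := hcc
      obtain ⟨a, haC, haΩ⟩ := h1
      obtain ⟨b, hbC, hbΩ⟩ := h2
      have hanb : a ≠ b := fun h =>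
        Set.eq_empty_iff_forall_notMem.1 hdisj2 a ⟨haC, h ▸ hbC⟩
      have hnadjab : ¬ G.Adj a b := by
        intro h
        have hbS : b ∉ S := not_mem_S_of_mem_comp hbC
        have hbu : b ∈ comp G S u := comp_closure haC h hbS
        exact Set.eq_empty_iff_forall_notMem.1 hdisj2 b ⟨hbu, hbC⟩
      obtain ⟨D, hD, haN, hbN⟩ := pmc_completion hΩ haΩ hbΩ hanb hnadjab
      obtain ⟨haD, d1, hd1, hadj1⟩ := haN
      obtain ⟨hbD, d2, hd2, hadj2⟩ := hbN
      have hDeq := isConnComp_eq_comp hD hd1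
      have hd2' : d2 ∈ comp G Ω d1 := hDeq ▸ hd2
      obtain ⟨pD, hpD⟩ := hd2'
      have hba : b ∈ comp G S a := by
        have ha1 : a ∈ comp G S a := comp_self (not_mem_S_of_mem_comp haC)
        have hd1S : d1 ∉ S := fun h => (hD.2.1 hd1) (hS h)
        have ha2 : d1 ∈ comp G S a := comp_closure ha1 hadj1.symm hd1S
        have ha3 : d2 ∈ comp G S d1 := ⟨pD, fun y hy hyS => hpD y hy (hS hyS)⟩
        have ha4 : d2 ∈ comp G S a := comp_trans ha2 ha3
        exact comp_closure ha4 hadj2 (not_mem_S_of_mem_comp hbC)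
      have hbu : b ∈ comp G S u := (comp_eq_of_mem haC) ▸ hba
      exact Set.eq_empty_iff_forall_notMem.1 hdisj2 b ⟨hbu, hbC⟩
    rcases hkey with h | h
    · exact fwd_half hS hsep hminS h
    · have hminS' : ∀ S' : Set V, S' ⊂ S → ¬ IsSeparator G v u S' :=
        fun S' hsub hsp => hminS S' hsub (sep_symm hsp)
      exact fwd_half hS (sep_symm hsep) hminS' h
  · rintro ⟨C, hC, hSC⟩
    have hSNC : S = NC G C := hSC
    have hnofull := no_full_component hΩ hC
    obtain ⟨v, hvΩ, hvS⟩ : ∃ v, v ∈ Ω ∧ v ∉ S := by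
      by_contra h
      push_neg at h
      exact hnofull (fun z hz => hSNC ▸ (h z hz))
    obtain ⟨u, huC⟩ := hC.1
    have huS : u ∉ S := fun h => (hC.2.1 huC) (hS h)
    have huv : u ≠ v := fun h => (hC.2.1 huC) (h ▸ hvΩ)
    have hvC : v ∉ C := fun h => (hC.2.1 h) hvΩ
    have hnadj : ¬ G.Adj u v := by
      intro h
      apply hvS
      rw [hSNC]
      exact ⟨hvC, u, huC, h⟩
    refine ⟨u, v, huv, hnadj, ⟨huS, hvS, ?_⟩, ?_⟩
    · intro p
      obtain ⟨x, hx1, hx2⟩ := walk_exit p huC hvC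
      exact ⟨x, hx1, hSNC ▸ hx2⟩
    · intro S' hS'
      rintro ⟨hu', hv', hsep'⟩
      obtain ⟨s, hsS, hsS'⟩ := Set.exists_of_ssubset hS'
      have hsNC : s ∈ NC G C := hSNC ▸ hsS
      obtain ⟨hsC, cs, hcsC, hcs⟩ := hsNC
      have hCeq := isConnComp_eq_comp hC huC
      have hcs' : cs ∈ comp G Ω u := hCeq ▸ hcsC
      obtain ⟨p1, hp1⟩ := hcs'
      have hsΩ : s ∈ Ω := hS hsS
      have hS'S : S' ⊆ S := hS'.1
      obtain ⟨q, hq⟩ : ∃ q : G.Walk s v, ∀ z ∈ q.support, z ∉ S' := by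
        by_cases hsv : s = v
        · subst hsv
          refine ⟨Walk.nil, fun z hz => ?_⟩
          simp only [Walk.support_nil, List.mem_singleton] at hz
          subst hz; exact hv'
        by_cases hadj : G.Adj s v
        · refine ⟨Walk.cons hadj Walk.nil, fun z hz => ?_⟩
          have : z = s ∨ z = v := by simpa using hz
          rcases this with rfl | rfl
          · exact hsS'
          · exact hv'
        · obtain ⟨D, hD, hsN, hvN⟩ := pmc_completion hΩ hsΩ hvΩ hsv hadj
          obtain ⟨hsD, e1, he1, hadj1⟩ := hsN
          obtain ⟨hvD, e2, he2, hadj2⟩ := hvN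
          have hDeq := isConnComp_eq_comp hD he1
          have he2' : e2 ∈ comp G Ω e1 := hDeq ▸ he2
          obtain ⟨p2, hp2⟩ := he2'
          refine ⟨Walk.cons hadj1.symm (p2.append (Walk.cons hadj2 Walk.nil)), ?_⟩
          intro z hz
          rw [Walk.support_cons, List.mem_cons] at hz
          rcases hz with rfl | hz
          · exact hsS'
          rw [Walk.mem_support_append_iff] at hz
          rcases hz with hz | hz
          · exact fun hzS' => (hp2 z hz) (hS (hS'S hzS'))
          · have : z = e2 ∨ z = v := by simpa using hz
            rcases this with rfl | rfl
            · exact fun hzS' => (hp2 z p2.end_mem_support) (hS (hS'S hzS'))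
            · exact hv'
      obtain ⟨x, hx1, hx2⟩ := hsep' ((p1.append (Walk.cons hcs Walk.nil)).append q)
      rw [Walk.mem_support_append_iff] at hx1
      rcases hx1 with hx1 | hx1
      · rw [Walk.mem_support_append_iff] at hx1
        rcases hx1 with hx1 | hx1
        · exact (hp1 x hx1) (hS (hS'S hx2))
        · have : x = cs ∨ x = s := by simpa using hx1
          rcases this with rfl | rfl
          · exact (hC.2.1 hcsC) (hS (hS'S hx2))
          · exact hsS' hx2
      · exact hq x hx1 hx2

end BTMain2

/-- Bouchitté–Todinca: for a potential maximal clique `Ω` of `G`, a subset `S ⊆ Ω` is a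
minimal separator of `G` iff `S` is the neighborhood of some connected component of `G − Ω`. -/
theorem stmt_18 {V : Type} [Fintype V] (G : SimpleGraph V) (Ω : Set V)
    (hΩ : IsPotentialMaximalClique G Ω) (S : Set V) (hS : S ⊆ Ω) :
    IsMinimalSeparator G S ↔
      ∃ C : Set V, IsConnCompAvoiding G Ω C ∧
        S = {v : V | v ∉ C ∧ ∃ u ∈ C, G.Adj u v} := by
  exact BTMain2.main_aux G Ω hΩ S hS
end
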